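/- arXiv:2508.06690 — 6 statements merged into one kernel-verified Lean document; each statement's English description precedes it below -/
import Mathlib

section
/- Let n ≥ 1 and let A, B : ℝ → Matrix (Fin n) (Fin n) ℝ be such that B is continuous, A is differentiable, and A'(t) = B(t) * A(t) for all t ∈ ℝ. Then t ↦ det(A(t)) is differentiable with d/dt det(A(t)) = trace(B(t)) · det(A(t)) for all t, and consequently det(A(t)) = det(A(0)) · exp(∫₀ᵗ trace(B(s)) ds) for all t. -/
open Matrix Finset

/-- Jacobi: derivative of det along an entrywise-differentiable matrix curve. -/
lemma jacobi_step {n : ℕ} (A : ℝ → Matrix (Fin n) (Fin n) ℝ)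
    (A' : Matrix (Fin n) (Fin n) ℝ) (t : ℝ)
    (hA : ∀ i j, HasDerivAt (fun s => A s i j) (A' i j) t) :
    HasDerivAt (fun s => (A s).det)
      (∑ i, ((A t).updateCol i (fun r => A' r i)).det) t := by
  have hform : (fun s => (A s).det)
      = fun s => ∑ σ : Equiv.Perm (Fin n),
          ((Equiv.Perm.sign σ : ℤ) : ℝ) * ∏ i, A s (σ i) i := by
    funext s; exact Matrix.det_apply' _
  rw [hform]
  have key : HasDerivAt
      (fun s => ∑ σ : Equiv.Perm (Fin n),
        ((Equiv.Perm.sign σ : ℤ) : ℝ) * ∏ i, A s (σ i) i)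
      (∑ σ : Equiv.Perm (Fin n), ((Equiv.Perm.sign σ : ℤ) : ℝ) *
        (∑ i, (∏ j ∈ Finset.univ.erase i, A t (σ j) j) • A' (σ i) i)) t := by
    apply HasDerivAt.fun_sum
    intro σ _
    exact (HasDerivAt.fun_finsetProd (fun i _ => hA (σ i) i)).const_mul _
  convert key using 1
  simp_rw [Matrix.det_apply', Finset.mul_sum]
  rw [Finset.sum_comm]
  refine Finset.sum_congr rfl fun σ _ => Finset.sum_congr rfl fun i _ => ?_
  rw [← Finset.mul_prod_erase Finset.univ
      (fun j => ((A t).updateCol i fun r => A' r i) (σ j) j) (Finset.mem_univ i)]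
  rw [Matrix.updateCol_apply, if_pos rfl, smul_eq_mul]
  rw [show (∏ j ∈ Finset.univ.erase i,
      ((A t).updateCol i fun r => A' r i) (σ j) j)
      = ∏ j ∈ Finset.univ.erase i, A t (σ j) j from
    Finset.prod_congr rfl fun j hj => by
      rw [Matrix.updateCol_apply, if_neg (Finset.ne_of_mem_erase hj)]]
  ring

lemma sum_det_update {n : ℕ} (M N : Matrix (Fin n) (Fin n) ℝ) :
    ∑ i, (M.updateCol i fun r => (N * M) r i).det = N.trace * M.det := by
  have h1 : ∀ i, (M.updateCol i fun r => (N * M) r i).det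
      = (M.adjugate * (N * M)) i i := by
    intro i
    rw [← Matrix.cramer_apply, Matrix.cramer_eq_adjugate_mulVec]
    simp [Matrix.mulVec, Matrix.mul_apply, dotProduct]
  simp_rw [h1]
  have h2 : ∑ i, (M.adjugate * (N * M)) i i = (M.adjugate * (N * M)).trace := rfl
  rw [h2, Matrix.trace_mul_comm, Matrix.mul_assoc, Matrix.mul_adjugate]
  simp [Matrix.smul_mul, mul_comm]

/-- Liouville/Jacobi formula for linear matrix ODEs: if `B` is continuous and
`A` is differentiable (entrywise) with `A'(t) = B(t) * A(t)`, then `t ↦ det(A(t))` is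
differentiable with derivative `trace(B(t)) * det(A(t))`, and
`det(A(t)) = det(A(0)) * exp(∫₀ᵗ trace(B(s)) ds)`. -/
theorem det_of_matrix_linear_ode
    (n : ℕ) (hn : 1 ≤ n)
    (A B : ℝ → Matrix (Fin n) (Fin n) ℝ)
    (hB : Continuous B)
    (hA : ∀ (t : ℝ) (i j : Fin n), HasDerivAt (fun s => A s i j) ((B t * A t) i j) t) :
    (∀ t : ℝ, HasDerivAt (fun s => (A s).det) ((B t).trace * (A t).det) t) ∧
      ∀ t : ℝ, (A t).det = (A 0).det * Real.exp (∫ s in (0:ℝ)..t, (B s).trace) := by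
  have hder : ∀ t : ℝ, HasDerivAt (fun s => (A s).det) ((B t).trace * (A t).det) t := by
    intro t
    have := jacobi_step A (B t * A t) t (hA t)
    rwa [sum_det_update (A t) (B t)] at this
  refine ⟨hder, ?_⟩
  -- continuity of the trace of B
  have hg : Continuous fun s => (B s).trace := by
    have : ∀ i : Fin n, Continuous fun s => B s i i := fun i =>
      (continuous_apply i).comp ((continuous_apply i).comp hB)
    exact continuous_finset_sum _ fun i _ => this i
  set G : ℝ → ℝ := fun t => ∫ s in (0:ℝ)..t, (B s).trace with hG
  have hGder : ∀ t : ℝ, HasDerivAt G ((B t).trace) t := by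
    intro t
    exact (hg.integral_hasStrictDerivAt 0 t).hasDerivAt
  -- integrating factor
  have hconst : ∀ t : ℝ, (A t).det * Real.exp (-G t) = (A 0).det := by
    have hder0 : ∀ t : ℝ,
        HasDerivAt (fun s => (A s).det * Real.exp (-G s)) 0 t := by
      intro t
      have he : HasDerivAt (fun s => Real.exp (-G s))
          (Real.exp (-G t) * -(B t).trace) t :=
        ((hGder t).fun_neg).exp
      have := (hder t).mul he
      refine this.congr_deriv ?_
      ring
    intro t
    have heq : (fun s => (A s).det * Real.exp (-G s)) t
        = (fun s => (A s).det * Real.exp (-G s)) 0 :=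
      is_const_of_deriv_eq_zero (fun s => (hder0 s).differentiableAt)
        (fun s => (hder0 s).deriv) t 0
    simpa [hG, intervalIntegral.integral_same] using heq
  intro t
  have h0 := hconst t
  have hexp : Real.exp (-G t) ≠ 0 := Real.exp_ne_zero _
  have : (A t).det = (A 0).det / Real.exp (-G t) := by
    field_simp at h0 ⊢
    linarith [h0]
  rw [this, Real.exp_neg]
  field_simp
  rfl
end

section
/- Let d ≥ 1, let v : ℝ × ℝ^d → ℝ^d be jointly C¹, and let φ be a flow of v that is jointly C². Then for all (t,x), det(Dφ(t,x)) = exp(∫₀ᵗ (div v)(s, φ(s,x)) ds), where (div v)(s,y) denotes the trace of the spatial derivative of v(s,·) at y. In particular det(Dφ(t,x)) > 0 for all (t,x), and if (div v)(s,y) = 0 for all (s,y) then det(Dφ(t,x)) = 1 for all (t,x), i.e. the flow is volume preserving. -/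
open Matrix

noncomputable def detCMM (d : ℕ) : ContinuousMultilinearMap ℝ (fun _ : Fin d => (Fin d → ℝ)) ℝ :=
  MultilinearMap.mkContinuous
    (Matrix.detRowAlternating : (Fin d → ℝ) [⋀^Fin d]→ₗ[ℝ] ℝ).toMultilinearMap
    (d.factorial) (by
      intro m
      have h1 : (Matrix.detRowAlternating : (Fin d → ℝ) [⋀^Fin d]→ₗ[ℝ] ℝ) m =
          ∑ σ : Equiv.Perm (Fin d), (Equiv.Perm.sign σ : ℤ) • ∏ i, m (σ i) i := by
        rw [show (Matrix.detRowAlternating (R := ℝ) (n := Fin d)) m = (Matrix.of m).det from rfl,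
          Matrix.det_apply]
        rfl
      rw [show ((Matrix.detRowAlternating : (Fin d → ℝ) [⋀^Fin d]→ₗ[ℝ] ℝ)).toMultilinearMap m =
        (Matrix.detRowAlternating : (Fin d → ℝ) [⋀^Fin d]→ₗ[ℝ] ℝ) m from rfl, h1]
      calc ‖∑ σ : Equiv.Perm (Fin d), (Equiv.Perm.sign σ : ℤ) • ∏ i, m (σ i) i‖
          ≤ ∑ σ : Equiv.Perm (Fin d), ‖(Equiv.Perm.sign σ : ℤ) • ∏ i, m (σ i) i‖ :=
            norm_sum_le _ _
        _ ≤ ∑ _σ : Equiv.Perm (Fin d), ∏ i, ‖m i‖ := by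
            apply Finset.sum_le_sum
            intro σ _
            rw [zsmul_eq_mul, norm_mul]
            have : ‖((Equiv.Perm.sign σ : ℤ) : ℝ)‖ = 1 := by
              rcases Int.units_eq_one_or (Equiv.Perm.sign σ) with h | h <;> simp [h]
            rw [this, one_mul, norm_prod]
            calc ∏ i, ‖m (σ i) i‖ ≤ ∏ i, ‖m (σ i)‖ := by
                  apply Finset.prod_le_prod (fun i _ => norm_nonneg _)
                  exact fun i _ => norm_le_pi_norm (m (σ i)) i
              _ = ∏ i, ‖m i‖ := Equiv.prod_comp σ (fun i => ‖m i‖)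
        _ = (d.factorial : ℝ) * ∏ i, ‖m i‖ := by
            rw [Finset.sum_const, Finset.card_univ, Fintype.card_perm, Fintype.card_fin,
              nsmul_eq_mul])

lemma hasDerivAt_matrix_det {d : ℕ} {M : ℝ → Matrix (Fin d) (Fin d) ℝ}
    {M' : Matrix (Fin d) (Fin d) ℝ} {t₀ : ℝ}
    (h : ∀ i j, HasDerivAt (fun s => M s i j) (M' i j) t₀) :
    HasDerivAt (fun s => (M s).det) (∑ i, (Matrix.updateRow (M t₀) i (M' i)).det) t₀ := by
  have hM : HasDerivAt (𝕜 := ℝ) (F := Fin d → Fin d → ℝ) (fun s i j => M s i j)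
      (fun i j => M' i j) t₀ := by
    rw [hasDerivAt_pi]; intro i; rw [hasDerivAt_pi]; exact h i
  have hf := ((detCMM d).hasFDerivAt (fun i j => M t₀ i j)).comp_hasDerivAt t₀ hM
  have heq : (detCMM d).linearDeriv (fun i j => M t₀ i j) (fun i j => M' i j) =
      ∑ i, (Matrix.updateRow (M t₀) i (M' i)).det := by
    rw [ContinuousMultilinearMap.linearDeriv_apply]
    exact Finset.sum_congr rfl fun i _ => rfl
  rw [heq] at hf
  exact hf

lemma jacobi_sum {d : ℕ} (M N : Matrix (Fin d) (Fin d) ℝ) :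
    ∑ i, (M.updateRow i ((N * M) i)).det = N.trace * M.det := by
  have h1 : ∀ i, (M.updateRow i ((N * M) i)).det = N i i * M.det := by
    intro i
    have h2 : (N * M) i = ∑ k, N i k • M k := by
      funext j; simp [Matrix.mul_apply, Finset.sum_apply]
    rw [h2, Matrix.det_updateRow_sum, smul_eq_mul]
  simp only [h1, Matrix.trace, Matrix.diag, ← Finset.sum_mul]

lemma ode_exp {F g : ℝ → ℝ} (hg : Continuous g) (hF : ∀ t, HasDerivAt F (g t * F t) t)
    (hF0 : F 0 = 1) (t : ℝ) :
    F t = Real.exp (∫ s in (0:ℝ)..t, g s) := by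
  set G : ℝ → ℝ := fun u => ∫ s in (0:ℝ)..u, g s with hGdef
  have hG : ∀ u, HasDerivAt G (g u) u := fun u =>
    intervalIntegral.integral_hasDerivAt_right (hg.intervalIntegrable _ _)
      (hg.stronglyMeasurableAtFilter _ _) hg.continuousAt
  have hH : ∀ u, HasDerivAt (fun w => F w * Real.exp (-G w)) 0 u := by
    intro u
    have h1 := (hF u).mul (((hG u).neg).exp)
    exact h1.congr_deriv (by ring)
  have hconst : F t * Real.exp (-G t) = F 0 * Real.exp (-G 0) :=
    is_const_of_deriv_eq_zero (fun u => (hH u).differentiableAt)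
      (fun u => (hH u).deriv) t 0
  have hG0 : G 0 = 0 := intervalIntegral.integral_same
  rw [hG0, neg_zero, Real.exp_zero, hF0, one_mul, Real.exp_neg] at hconst
  have hpos := Real.exp_pos (G t)
  field_simp at hconst
  exact hconst

section Main
variable {d : ℕ}
local notation "E" => EuclideanSpace ℝ (Fin d)

lemma partial_fderiv {f : ℝ × E → E} (hf : Differentiable ℝ f) (t : ℝ) (x : E) :
    fderiv ℝ (fun y => f (t, y)) x =
      (fderiv ℝ f (t, x)).comp (ContinuousLinearMap.inr ℝ ℝ E) := by
  have h1 : HasFDerivAt (fun y : E => ((t, y) : ℝ × E))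
      (ContinuousLinearMap.inr ℝ ℝ E) x :=
    (hasFDerivAt_const t x).prodMk (hasFDerivAt_id x)
  exact ((hf (t, x)).hasFDerivAt.comp x h1).fderiv

lemma flow_time_deriv {v φ : ℝ × E → E} (hφd : Differentiable ℝ φ)
    (hφflow : ∀ t x, HasDerivAt (fun s => φ (s, x)) (v (t, φ (t, x))) t)
    (p : ℝ × E) : fderiv ℝ φ p ((1 : ℝ), (0 : E)) = v (p.1, φ p) := by
  have h1 : HasDerivAt (fun s : ℝ => ((s, p.2) : ℝ × E)) ((1 : ℝ), (0 : E)) p.1 :=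
    (hasDerivAt_id p.1).prodMk (hasDerivAt_const p.1 p.2)
  have h2 : HasDerivAt (fun s => φ (s, p.2)) (fderiv ℝ φ p ((1 : ℝ), (0 : E))) p.1 := by
    exact ((hφd p).hasFDerivAt.comp_hasDerivAt p.1 h1)
  simpa using h2.unique (hφflow p.1 p.2)

lemma key_deriv {v φ : ℝ × E → E} (hv : ContDiff ℝ 1 v)
    (hφflow : ∀ t x, HasDerivAt (fun s => φ (s, x)) (v (t, φ (t, x))) t)
    (hφC2 : ContDiff ℝ 2 φ) (t : ℝ) (x : E) :
    HasDerivAt (fun s => fderiv ℝ (fun y => φ (s, y)) x)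
      ((fderiv ℝ (fun z => v (t, z)) (φ (t, x))).comp
        (fderiv ℝ (fun y => φ (t, y)) x)) t := by
  have hφd : Differentiable ℝ φ := hφC2.differentiable two_ne_zero
  have hvd : Differentiable ℝ v := hv.differentiable one_ne_zero
  set Φ := fderiv ℝ φ with hΦdef
  have hΦ : ContDiff ℝ 1 Φ := hφC2.fderiv_right (by norm_num)
  have hΦd : Differentiable ℝ Φ := hΦ.differentiable one_ne_zero
  set p : ℝ × E := (t, x) with hpdef
  have h1 : HasDerivAt (fun s : ℝ => ((s, x) : ℝ × E)) ((1 : ℝ), (0 : E)) t :=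
    (hasDerivAt_id t).prodMk (hasDerivAt_const t x)
  have h2 : HasDerivAt (fun s => Φ (s, x)) (fderiv ℝ Φ p ((1 : ℝ), (0 : E))) t := by
    exact ((hΦd p).hasFDerivAt.comp_hasDerivAt t h1)
  have h3 : HasDerivAt (fun s => (Φ (s, x)).comp (ContinuousLinearMap.inr ℝ ℝ E))
      ((fderiv ℝ Φ p ((1 : ℝ), (0 : E))).comp (ContinuousLinearMap.inr ℝ ℝ E)) t := by
    have hc := ((ContinuousLinearMap.compL ℝ E (ℝ × E) E).flip
      (ContinuousLinearMap.inr ℝ ℝ E)).hasFDerivAt.comp_hasDerivAt t h2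
    exact hc
  have hsymm : IsSymmSndFDerivAt ℝ φ p := hφC2.contDiffAt.isSymmSndFDerivAt (by norm_num)
  have hkey : (fderiv ℝ Φ p ((1 : ℝ), (0 : E))).comp (ContinuousLinearMap.inr ℝ ℝ E) =
      (fderiv ℝ (fun z => v (t, z)) (φ (t, x))).comp
        (fderiv ℝ (fun y => φ (t, y)) x) := by
    refine ContinuousLinearMap.ext fun w => ?_
    have e1 : (fderiv ℝ Φ p ((1 : ℝ), (0 : E))) ((0 : ℝ), w) =
        (fderiv ℝ Φ p ((0 : ℝ), w)) ((1 : ℝ), (0 : E)) := hsymm _ _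
    have e2 : (fderiv ℝ Φ p ((0 : ℝ), w)) ((1 : ℝ), (0 : E)) =
        fderiv ℝ (fun q => Φ q ((1 : ℝ), (0 : E))) p ((0 : ℝ), w) := by
      have hc := ((ContinuousLinearMap.apply ℝ E (((1 : ℝ), (0 : E)) : ℝ × E)).hasFDerivAt.comp
        p (hΦd p).hasFDerivAt).fderiv
      rw [show (fun q : ℝ × E => Φ q ((1 : ℝ), (0 : E))) =
        (⇑((ContinuousLinearMap.apply ℝ E) (((1 : ℝ), (0 : E)) : ℝ × E)) ∘ Φ) from rfl, hc]
      rfl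
    have e3 : (fun q : ℝ × E => Φ q ((1 : ℝ), (0 : E))) = fun q => v (q.1, φ q) := by
      funext q; exact flow_time_deriv hφd hφflow q
    have e4 : HasFDerivAt (fun q : ℝ × E => v (q.1, φ q))
        ((fderiv ℝ v (t, φ p)).comp
          ((ContinuousLinearMap.fst ℝ ℝ E).prod (Φ p))) p :=
      (hvd (t, φ p)).hasFDerivAt.comp p ((hasFDerivAt_fst).prodMk (hφd p).hasFDerivAt)
    have e5 : fderiv ℝ (fun q : ℝ × E => v (q.1, φ q)) p ((0 : ℝ), w) =
        fderiv ℝ v (t, φ p) ((0 : ℝ), Φ p ((0 : ℝ), w)) := by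
      rw [e4.fderiv]; rfl
    have e6 : fderiv ℝ v (t, φ p) ((0 : ℝ), Φ p ((0 : ℝ), w)) =
        (fderiv ℝ (fun z => v (t, z)) (φ (t, x))) (Φ p ((0 : ℝ), w)) := by
      rw [partial_fderiv hvd t (φ (t, x))]; rfl
    have e7 : Φ p ((0 : ℝ), w) = (fderiv ℝ (fun y => φ (t, y)) x) w := by
      rw [partial_fderiv hφd t x]; rfl
    calc ((fderiv ℝ Φ p ((1 : ℝ), (0 : E))).comp (ContinuousLinearMap.inr ℝ ℝ E)) w
        = (fderiv ℝ Φ p ((1 : ℝ), (0 : E))) ((0 : ℝ), w) := rfl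
      _ = (fderiv ℝ Φ p ((0 : ℝ), w)) ((1 : ℝ), (0 : E)) := e1
      _ = fderiv ℝ (fun q => Φ q ((1 : ℝ), (0 : E))) p ((0 : ℝ), w) := e2
      _ = fderiv ℝ (fun q : ℝ × E => v (q.1, φ q)) p ((0 : ℝ), w) := by rw [e3]
      _ = fderiv ℝ v (t, φ p) ((0 : ℝ), Φ p ((0 : ℝ), w)) := e5
      _ = (fderiv ℝ (fun z => v (t, z)) (φ (t, x))) (Φ p ((0 : ℝ), w)) := e6
      _ = ((fderiv ℝ (fun z => v (t, z)) (φ (t, x))).comp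
            (fderiv ℝ (fun y => φ (t, y)) x)) w := by rw [e7]; rfl
  rw [← hkey]
  have hfun : (fun s => fderiv ℝ (fun y => φ (s, y)) x) =
      fun s => (Φ (s, x)).comp (ContinuousLinearMap.inr ℝ ℝ E) := by
    funext s; exact partial_fderiv hφd s x
  rw [hfun]
  exact h3

/-- Main formula, one x at a time. -/
lemma liouville_formula {v φ : ℝ × E → E} (hv : ContDiff ℝ 1 v)
    (hφ0 : ∀ x, φ (0, x) = x)
    (hφflow : ∀ t x, HasDerivAt (fun s => φ (s, x)) (v (t, φ (t, x))) t)
    (hφC2 : ContDiff ℝ 2 φ) (t : ℝ) (x : E) :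
    (fderiv ℝ (fun y => φ (t, y)) x).det =
      Real.exp (∫ s in (0:ℝ)..t,
        LinearMap.trace ℝ E
          (fderiv ℝ (fun z => v (s, z)) (φ (s, x)) : E →ₗ[ℝ] E)) := by
  classical
  have hφd : Differentiable ℝ φ := hφC2.differentiable two_ne_zero
  have hvd : Differentiable ℝ v := hv.differentiable one_ne_zero
  set b : Module.Basis (Fin d) ℝ E := (EuclideanSpace.basisFun (Fin d) ℝ).toBasis with hb
  set A : ℝ → (E →L[ℝ] E) := fun s => fderiv ℝ (fun y => φ (s, y)) x with hA
  set B : ℝ → (E →L[ℝ] E) := fun s => fderiv ℝ (fun z => v (s, z)) (φ (s, x)) with hBdef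
  set M : ℝ → Matrix (Fin d) (Fin d) ℝ :=
    fun s => LinearMap.toMatrix b b (A s : E →ₗ[ℝ] E) with hM
  set N : ℝ → Matrix (Fin d) (Fin d) ℝ :=
    fun s => LinearMap.toMatrix b b (B s : E →ₗ[ℝ] E) with hN
  set g : ℝ → ℝ := fun s => (N s).trace with hg
  set F : ℝ → ℝ := fun s => (M s).det with hFdef
  -- entrywise derivative
  have hA' : ∀ τ, HasDerivAt A ((B τ).comp (A τ)) τ := fun τ =>
    key_deriv hv hφflow hφC2 τ x
  have hF' : ∀ τ, HasDerivAt F (g τ * F τ) τ := by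
    intro τ
    have hMij : ∀ i j, HasDerivAt (fun s => M s i j) ((N τ * M τ) i j) τ := by
      intro i j
      have hc : HasDerivAt (fun s => b.repr ((A s) (b j)) i)
          (b.repr (((B τ).comp (A τ)) (b j)) i) τ := by
        have h₁ := (ContinuousLinearMap.apply ℝ E (b j)).hasFDerivAt.comp_hasDerivAt τ (hA' τ)
        exact ((b.coord i).toContinuousLinearMap).hasFDerivAt.comp_hasDerivAt τ h₁
      have e1 : (fun s => M s i j) = fun s => b.repr ((A s) (b j)) i := by
        funext s
        show (LinearMap.toMatrix b b) (A s : E →ₗ[ℝ] E) i j = _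
        rw [LinearMap.toMatrix_apply]; rfl
      have e2 : (N τ * M τ) i j = b.repr (((B τ).comp (A τ)) (b j)) i := by
        rw [hN, hM, ← LinearMap.toMatrix_comp b b b, LinearMap.toMatrix_apply]
        rfl
      rw [e1, e2]
      exact hc
    have := hasDerivAt_matrix_det hMij
    rwa [jacobi_sum] at this
  have hF0 : F 0 = 1 := by
    have hid : (fun y => φ ((0 : ℝ), y)) = id := funext hφ0
    have : A 0 = ContinuousLinearMap.id ℝ E := by
      rw [hA]; simp only [hid]; exact fderiv_id
    rw [hFdef, hM]
    simp [this]
  have hBcont : Continuous B := by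
    have h1 : Continuous (fun s => (s, φ (s, x)) : ℝ → ℝ × E) :=
      continuous_id.prodMk (hφC2.continuous.comp (continuous_id.prodMk continuous_const))
    have h2 : Continuous (fderiv ℝ v) := hv.continuous_fderiv one_ne_zero
    have h3 : Continuous (fun s => fderiv ℝ v (s, φ (s, x))) := h2.comp h1
    have h4 : B = fun s => ((ContinuousLinearMap.compL ℝ E (ℝ × E) E).flip
        (ContinuousLinearMap.inr ℝ ℝ E)) (fderiv ℝ v (s, φ (s, x))) := by
      funext s
      rw [hBdef]
      simp only [ContinuousLinearMap.flip_apply, ContinuousLinearMap.compL_apply]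
      exact partial_fderiv hvd s (φ (s, x))
    rw [h4]
    exact (ContinuousLinearMap.continuous _).comp h3
  have hgcont : Continuous g := by
    have hent : ∀ i : Fin d, Continuous (fun s => N s i i) := by
      intro i
      have : (fun s => N s i i) = fun s => b.repr ((B s) (b i)) i := by
        funext s
        show (LinearMap.toMatrix b b) (B s : E →ₗ[ℝ] E) i i = _
        rw [LinearMap.toMatrix_apply]; rfl
      rw [this]
      exact ((b.coord i).toContinuousLinearMap).continuous.comp
        ((ContinuousLinearMap.apply ℝ E (b i)).continuous.comp hBcont)
    have : g = fun s => ∑ i, N s i i := by funext s; rw [hg]; rfl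
    rw [this]
    exact continuous_finset_sum _ fun i _ => hent i
  have hmain := ode_exp hgcont hF' hF0 t
  have hdet : (fderiv ℝ (fun y => φ (t, y)) x).det = F t := by
    rw [hFdef, hM]
    exact (LinearMap.det_toMatrix b _).symm
  have htr : ∀ s, LinearMap.trace ℝ E
      (fderiv ℝ (fun z => v (s, z)) (φ (s, x)) : E →ₗ[ℝ] E) = g s := by
    intro s
    rw [hg, hN]
    exact LinearMap.trace_eq_matrix_trace ℝ b _
  rw [hdet, hmain]
  congr 1
  exact intervalIntegral.integral_congr fun s _ => (htr s).symm

end Main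



/-- Liouville's formula for flows: if `v` is a jointly `C¹` time-dependent
vector field on `ℝ^d` and `φ` is a jointly `C²` flow of `v`, then
`det(Dφ(t,x)) = exp(∫₀ᵗ (div v)(s, φ(s,x)) ds)`; in particular the Jacobian determinant is
positive, and if `div v ≡ 0` then `det(Dφ(t,x)) = 1` (the flow is volume preserving). -/
theorem jacobian_det_of_flow
    (d : ℕ) (hd : 1 ≤ d)
    (v : ℝ × EuclideanSpace ℝ (Fin d) → EuclideanSpace ℝ (Fin d))
    (hv : ContDiff ℝ 1 v)
    (φ : ℝ × EuclideanSpace ℝ (Fin d) → EuclideanSpace ℝ (Fin d))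
    (hφ0 : ∀ x, φ (0, x) = x)
    (hφflow : ∀ t x, HasDerivAt (fun s => φ (s, x)) (v (t, φ (t, x))) t)
    (hφC2 : ContDiff ℝ 2 φ) :
    (∀ (t : ℝ) (x : EuclideanSpace ℝ (Fin d)),
        (fderiv ℝ (fun y => φ (t, y)) x).det =
          Real.exp (∫ s in (0:ℝ)..t,
            LinearMap.trace ℝ (EuclideanSpace ℝ (Fin d))
              (fderiv ℝ (fun z => v (s, z)) (φ (s, x)) :
                EuclideanSpace ℝ (Fin d) →ₗ[ℝ] EuclideanSpace ℝ (Fin d)))) ∧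
      (∀ (t : ℝ) (x : EuclideanSpace ℝ (Fin d)),
        0 < (fderiv ℝ (fun y => φ (t, y)) x).det) ∧
      ((∀ (s : ℝ) (y : EuclideanSpace ℝ (Fin d)),
          LinearMap.trace ℝ (EuclideanSpace ℝ (Fin d))
            (fderiv ℝ (fun z => v (s, z)) y :
              EuclideanSpace ℝ (Fin d) →ₗ[ℝ] EuclideanSpace ℝ (Fin d)) = 0) →
        ∀ (t : ℝ) (x : EuclideanSpace ℝ (Fin d)),
          (fderiv ℝ (fun y => φ (t, y)) x).det = 1) := by
  have hmain := liouville_formula hv hφ0 hφflow hφC2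
  refine ⟨hmain, fun t x => ?_, fun hdiv t x => ?_⟩
  · rw [hmain t x]; exact Real.exp_pos _
  · rw [hmain t x]
    have : (∫ s in (0:ℝ)..t,
        LinearMap.trace ℝ (EuclideanSpace ℝ (Fin d))
          (fderiv ℝ (fun z => v (s, z)) (φ (s, x)) :
            EuclideanSpace ℝ (Fin d) →ₗ[ℝ] EuclideanSpace ℝ (Fin d))) = 0 := by
      rw [intervalIntegral.integral_congr (g := fun _ => (0:ℝ))
        (fun s _ => hdiv s (φ (s, x)))]
      simp
    rw [this, Real.exp_zero]
end

section
/- Let d ≥ 1, let v : ℝ × ℝ^d → ℝ^d be jointly C², let φ be a flow of v that is jointly C² with each φ(t,·) a bijection of ℝ^d whose spatial derivative is invertible everywhere, and let ψ : ℝ × ℝ^d → ℝ^d be jointly C² with ψ(t, φ(t,y)) = y and φ(t, ψ(t,x)) = x for all (t,x,y). Let ρ₀ : ℝ^d → ℝ be C¹ and define ρ(t,x) := ρ₀(ψ(t,x)) · det(Dψ(t,x)). Then ρ(0,·) = ρ₀ and ρ solves the continuity equation: ∂_t ρ(t,x) + div(ρ(t,·) v(t,·))(x) = 0 for all (t,x),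 where div(w)(x) is the trace of the derivative of the vector field w at x. -/
noncomputable section
namespace ContEqAux

open scoped BigOperators

/-- The determinant as a continuous multilinear map in the rows. -/
def detCM (d : ℕ) : ContinuousMultilinearMap ℝ (fun _ : Fin d => (Fin d → ℝ)) ℝ :=
  MultilinearMap.mkContinuous
    (Matrix.detRowAlternating (R := ℝ) (n := Fin d)).toMultilinearMap
    (d.factorial) (by
      intro m
      have h1 : ‖(Matrix.detRowAlternating (R := ℝ) (n := Fin d)).toMultilinearMap m‖
          = |Matrix.det (Matrix.of m)| := rfl
      rw [h1, Matrix.det_apply]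
      calc |∑ σ : Equiv.Perm (Fin d), Equiv.Perm.sign σ • ∏ i, Matrix.of m (σ i) i|
          ≤ ∑ σ : Equiv.Perm (Fin d), |Equiv.Perm.sign σ • ∏ i, Matrix.of m (σ i) i| :=
            Finset.abs_sum_le_sum_abs _ _
        _ ≤ ∑ _σ : Equiv.Perm (Fin d), ∏ i, ‖m i‖ := by
            apply Finset.sum_le_sum
            intro σ _
            have hs : |Equiv.Perm.sign σ • ∏ i, Matrix.of m (σ i) i|
                = |∏ i, m (σ i) i| := by
              rcases Int.units_eq_one_or (Equiv.Perm.sign σ) with h | h <;>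
                simp [h, Units.smul_def, Matrix.of_apply]
            rw [hs, Finset.abs_prod]
            calc ∏ i, |m (σ i) i| ≤ ∏ i, ‖m (σ i)‖ := by
                  apply Finset.prod_le_prod
                  · intro i _; positivity
                  · intro i _
                    exact norm_le_pi_norm (m (σ i)) i
              _ = ∏ i, ‖m i‖ := Equiv.prod_comp σ (fun i => ‖m i‖)
        _ = (d.factorial : ℝ) * ∏ i, ‖m i‖ := by
            rw [Finset.sum_const, Finset.card_univ, nsmul_eq_mul]
            congr 2
            simp [Fintype.card_perm])

@[simp] lemma detCM_apply (d : ℕ) (m : Fin d → Fin d → ℝ) :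
    detCM d m = Matrix.det (Matrix.of m) := rfl

end ContEqAux

namespace ContEqAux
variable {d : ℕ}

lemma det_updateRow_one (i : Fin d) (r : Fin d → ℝ) :
    ((1 : Matrix (Fin d) (Fin d) ℝ).updateRow i r).det = r i := by
  have := Matrix.cramer_transpose_apply (1 : Matrix (Fin d) (Fin d) ℝ) r i
  rw [Matrix.transpose_one, Matrix.cramer_one] at this
  simpa using this.symm

lemma hasDerivAt_det_one {mA : ℝ → (Fin d → Fin d → ℝ)} {mA' : Fin d → Fin d → ℝ} {t : ℝ}
    (h : HasDerivAt mA mA' t) (h1 : Matrix.of (mA t) = 1) :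
    HasDerivAt (fun s => Matrix.det (Matrix.of (mA s))) (Matrix.trace (Matrix.of mA')) t := by
  have H := ((detCM d).hasFDerivAt (mA t)).comp_hasDerivAt t h
  have hval : ((detCM d).linearDeriv (mA t)) mA' = Matrix.trace (Matrix.of mA') := by
    rw [ContinuousMultilinearMap.linearDeriv_apply]
    have : ∀ i : Fin d, detCM d (Function.update (mA t) i (mA' i)) = mA' i i := by
      intro i
      have hu : Matrix.of (Function.update (mA t) i (mA' i))
          = (1 : Matrix (Fin d) (Fin d) ℝ).updateRow i (mA' i) := by
        rw [← h1]; rfl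
      rw [detCM_apply, hu, det_updateRow_one]
    rw [Finset.sum_congr rfl fun i _ => this i]
    rfl
  rw [← hval]
  exact H

lemma hasDerivAt_det_inv {mA : ℝ → (Fin d → Fin d → ℝ)} {mA' : Fin d → Fin d → ℝ} {t : ℝ}
    (h : HasDerivAt mA mA' t) (mB : Matrix (Fin d) (Fin d) ℝ)
    (hBA : mB * Matrix.of (mA t) = 1) (hAB : Matrix.of (mA t) * mB = 1) :
    HasDerivAt (fun s => Matrix.det (Matrix.of (mA s)))
      ((Matrix.of (mA t)).det * Matrix.trace (mB * Matrix.of mA')) t := by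
  -- left multiplication by mB as a continuous linear map on the pi space
  let mulB : (Fin d → Fin d → ℝ) →ₗ[ℝ] (Fin d → Fin d → ℝ) :=
    { toFun := fun g => Matrix.of.symm (mB * Matrix.of g)
      map_add' := fun g₁ g₂ => by
        show Matrix.of.symm (mB * Matrix.of (g₁ + g₂)) = Matrix.of.symm (mB * Matrix.of g₁) + Matrix.of.symm (mB * Matrix.of g₂)
        have : Matrix.of (g₁ + g₂) = Matrix.of g₁ + Matrix.of g₂ := rfl
        rw [this, Matrix.mul_add]; rfl
      map_smul' := fun c g => by
        show Matrix.of.symm (mB * Matrix.of (c • g)) = c • Matrix.of.symm (mB * Matrix.of g)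
        have : (Matrix.of (c • g) : Matrix (Fin d) (Fin d) ℝ) = c • Matrix.of g := rfl
        rw [this, Matrix.mul_smul]; rfl }
  let mulBC : (Fin d → Fin d → ℝ) →L[ℝ] (Fin d → Fin d → ℝ) :=
    LinearMap.toContinuousLinearMap mulB
  have h2 : HasDerivAt (fun s => mulBC (mA s)) (mulBC mA') t :=
    (mulBC.hasFDerivAt).comp_hasDerivAt t h
  have h3 : HasDerivAt (fun s => Matrix.det (Matrix.of (mulBC (mA s))))
      (Matrix.trace (Matrix.of (mulBC mA'))) t := by
    apply hasDerivAt_det_one h2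
    show mB * Matrix.of (mA t) = 1
    exact hBA
  have h4 := h3.const_mul ((Matrix.of (mA t)).det)
  have hdetB : (Matrix.of (mA t)).det * mB.det = 1 := by
    rw [← Matrix.det_mul, hAB, Matrix.det_one]
  have hfun : (fun s => (Matrix.of (mA t)).det * Matrix.det (Matrix.of (mulBC (mA s))))
      = fun s => Matrix.det (Matrix.of (mA s)) := by
    funext s
    have : Matrix.of (mulBC (mA s)) = mB * Matrix.of (mA s) := rfl
    rw [this, Matrix.det_mul, ← mul_assoc, mul_comm (Matrix.of (mA t)).det mB.det,
      mul_comm mB.det (Matrix.of (mA t)).det, hdetB, one_mul]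
  have : Matrix.of (mulBC mA') = mB * Matrix.of mA' := rfl
  rw [← this]
  rw [← hfun]
  exact h4
end ContEqAux

namespace ContEqAux
variable {d : ℕ}

local notation "E" d => EuclideanSpace ℝ (Fin d)

def bas (d : ℕ) : Module.Basis (Fin d) ℝ (EuclideanSpace ℝ (Fin d)) :=
  (EuclideanSpace.basisFun (Fin d) ℝ).toBasis

def matOf (L : EuclideanSpace ℝ (Fin d) →L[ℝ] EuclideanSpace ℝ (Fin d)) :
    Matrix (Fin d) (Fin d) ℝ :=
  LinearMap.toMatrix (bas d) (bas d) (L : EuclideanSpace ℝ (Fin d) →ₗ[ℝ] EuclideanSpace ℝ (Fin d))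

lemma matOf_comp (L M : EuclideanSpace ℝ (Fin d) →L[ℝ] EuclideanSpace ℝ (Fin d)) :
    matOf (L.comp M) = matOf L * matOf M := by
  unfold matOf
  rw [ContinuousLinearMap.toLinearMap_comp, LinearMap.toMatrix_comp (bas d) (bas d) (bas d)]

lemma matOf_id : matOf (ContinuousLinearMap.id ℝ (EuclideanSpace ℝ (Fin d))) = 1 := by
  unfold matOf
  rw [ContinuousLinearMap.coe_id, LinearMap.toMatrix_id]

lemma det_matOf (L : EuclideanSpace ℝ (Fin d) →L[ℝ] EuclideanSpace ℝ (Fin d)) :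
    (matOf L).det = L.det := LinearMap.det_toMatrix _ _

lemma trace_matOf (L : EuclideanSpace ℝ (Fin d) →L[ℝ] EuclideanSpace ℝ (Fin d)) :
    Matrix.trace (matOf L) = LinearMap.trace ℝ (EuclideanSpace ℝ (Fin d))
      (L : EuclideanSpace ℝ (Fin d) →ₗ[ℝ] EuclideanSpace ℝ (Fin d)) :=
  (LinearMap.trace_eq_matrix_trace ℝ (bas d) _).symm

def matOfL : (EuclideanSpace ℝ (Fin d) →L[ℝ] EuclideanSpace ℝ (Fin d)) →L[ℝ]
    (Fin d → Fin d → ℝ) :=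
  LinearMap.toContinuousLinearMap
  { toFun := fun L => Matrix.of.symm (matOf L)
    map_add' := fun L M => by
      show Matrix.of.symm (matOf (L + M)) = Matrix.of.symm (matOf L) + Matrix.of.symm (matOf M)
      unfold matOf
      rw [ContinuousLinearMap.coe_add, map_add]
      rfl
    map_smul' := fun c L => by
      show Matrix.of.symm (matOf (c • L)) = c • Matrix.of.symm (matOf L)
      unfold matOf
      rw [ContinuousLinearMap.coe_smul, map_smul]
      rfl }

lemma of_matOfL (L : EuclideanSpace ℝ (Fin d) →L[ℝ] EuclideanSpace ℝ (Fin d)) :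
    Matrix.of (matOfL L) = matOf L := rfl

lemma trace_smulRight' (f : EuclideanSpace ℝ (Fin d) →L[ℝ] ℝ) (w : EuclideanSpace ℝ (Fin d)) :
    LinearMap.trace ℝ (EuclideanSpace ℝ (Fin d))
      ((f.smulRight w : EuclideanSpace ℝ (Fin d) →L[ℝ] EuclideanSpace ℝ (Fin d)) :
        EuclideanSpace ℝ (Fin d) →ₗ[ℝ] EuclideanSpace ℝ (Fin d)) = f w := by
  rw [LinearMap.trace_eq_matrix_trace ℝ (bas d), Matrix.trace]
  have hentry : ∀ i : Fin d, (LinearMap.toMatrix (bas d) (bas d)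
      ((f.smulRight w : EuclideanSpace ℝ (Fin d) →L[ℝ] EuclideanSpace ℝ (Fin d)) :
        EuclideanSpace ℝ (Fin d) →ₗ[ℝ] EuclideanSpace ℝ (Fin d))) i i
      = f (bas d i) * w i := by
    intro i
    rw [LinearMap.toMatrix_apply]
    show ((bas d).repr (f ((bas d) i) • w)) i = f ((bas d) i) * w i
    have : ((bas d).repr (f ((bas d) i) • w)) i = (f ((bas d) i) • w) i := rfl
    rw [this]
    rfl
  rw [Finset.sum_congr rfl fun i _ => by
    show Matrix.diag _ i = _
    rw [Matrix.diag_apply, hentry i]]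
  have : ∀ i : Fin d, f (bas d i) * w i = f (w i • bas d i) := by
    intro i; rw [map_smul]; simp [mul_comm]
  rw [Finset.sum_congr rfl fun i _ => this i, ← map_sum]
  congr 1
  have := (bas d).sum_repr w
  have hrepr : ∀ i, (bas d).repr w i = w i := fun i => rfl
  calc ∑ i, w i • bas d i = ∑ i, (bas d).repr w i • bas d i := by
        refine Finset.sum_congr rfl fun i _ => by rw [hrepr]
    _ = w := (bas d).sum_repr w

end ContEqAux

namespace ContEqAux

variable {F G : Type*} [NormedAddCommGroup F] [NormedSpace ℝ F]
  [NormedAddCommGroup G] [NormedSpace ℝ G]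

lemma hasFDerivAt_partial_snd {f : ℝ × F → G} {t : ℝ} {x : F}
    (hf : DifferentiableAt ℝ f (t, x)) :
    HasFDerivAt (fun y => f (t, y))
      ((fderiv ℝ f (t, x)).comp (ContinuousLinearMap.inr ℝ ℝ F)) x :=
  hf.hasFDerivAt.comp x (hasFDerivAt_prodMk_right t x)

lemma hasDerivAt_partial_fst {f : ℝ × F → G} {t : ℝ} {x : F}
    (hf : DifferentiableAt ℝ f (t, x)) :
    HasDerivAt (fun s => f (s, x)) ((fderiv ℝ f (t, x)) (1, 0)) t :=
  hf.hasFDerivAt.comp_hasDerivAt t ((hasDerivAt_id t).prodMk (hasDerivAt_const t x))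

end ContEqAux

namespace ContEqAux
open ContinuousLinearMap

variable {F G : Type*} [NormedAddCommGroup F] [NormedSpace ℝ F]
  [NormedAddCommGroup G] [NormedSpace ℝ G]

/-- The spatial (partial) Fréchet derivative of a time dependent map. -/
def pD (f : ℝ × F → G) (p : ℝ × F) : F →L[ℝ] G :=
  (fderiv ℝ f p).comp (ContinuousLinearMap.inr ℝ ℝ F)

lemma pD_spatial {f : ℝ × F → G} (hf : Differentiable ℝ f) (t : ℝ) (x : F) :
    HasFDerivAt (fun y => f (t, y)) (pD f (t, x)) x :=
  hasFDerivAt_partial_snd (hf _)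

lemma pD_contDiff {f : ℝ × F → G} (hf : ContDiff ℝ 2 f) : ContDiff ℝ 1 (pD f) := by
  have h1 : ContDiff ℝ 1 (fderiv ℝ f) := hf.fderiv_right (by norm_num)
  have h2 := (((ContinuousLinearMap.compL ℝ F (ℝ × F) G).flip
    (ContinuousLinearMap.inr ℝ ℝ F)).contDiff (n := 1)).comp h1
  convert h2 using 2 with p
  funext p; rfl

lemma pD_curve {f : ℝ × F → G} (hf : ContDiff ℝ 2 f) (t : ℝ) (x : F) :
    HasDerivAt (fun s => pD f (s, x))
      ((fderiv ℝ (fderiv ℝ f) (t, x) (1, 0)).comp (ContinuousLinearMap.inr ℝ ℝ F)) t := by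
  have h1 : ContDiff ℝ 1 (fderiv ℝ f) := hf.fderiv_right (by norm_num)
  have hDcurve : HasDerivAt (fun s => fderiv ℝ f (s, x))
      (fderiv ℝ (fderiv ℝ f) (t, x) (1, 0)) t :=
    hasDerivAt_partial_fst ((h1.differentiable one_ne_zero) _)
  have h2 := (((ContinuousLinearMap.compL ℝ F (ℝ × F) G).flip
    (ContinuousLinearMap.inr ℝ ℝ F)).hasFDerivAt).comp_hasDerivAt t hDcurve
  convert h2 using 2 with s
  all_goals rfl

lemma snd_deriv_swap {f : ℝ × F → G} (hf : ContDiff ℝ 2 f) (t : ℝ) (y : F) (w : F) :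
    fderiv ℝ (fderiv ℝ f) (t, y) (1, 0) ((0 : ℝ), w)
      = fderiv ℝ (fun z => fderiv ℝ f (t, z) ((1 : ℝ), (0 : F))) y w := by
  have hsymm := (hf.contDiffAt (x := (t, y))).isSymmSndFDerivAt (by simp)
  rw [hsymm ((1 : ℝ), (0 : F)) ((0 : ℝ), w)]
  have hg : HasFDerivAt (fun z => fderiv ℝ f (t, z))
      ((fderiv ℝ (fderiv ℝ f) (t, y)).comp (ContinuousLinearMap.inr ℝ ℝ F)) y :=
    hasFDerivAt_partial_snd (((hf.fderiv_right (m := 1) (by norm_num)).differentiable one_ne_zero) _)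
  have he : HasFDerivAt (fun z => fderiv ℝ f (t, z) ((1 : ℝ), (0 : F)))
      ((ContinuousLinearMap.apply ℝ G ((1 : ℝ), (0 : F))).comp
        ((fderiv ℝ (fderiv ℝ f) (t, y)).comp (ContinuousLinearMap.inr ℝ ℝ F))) y :=
    ((ContinuousLinearMap.apply ℝ G ((1 : ℝ), (0 : F))).hasFDerivAt).comp y hg
  rw [he.fderiv]
  rfl

end ContEqAux



/-- continuity equation: with `φ` a jointly `C²` flow of a jointly `C²`
time-dependent vector field `v` on `ℝ^d`, each `φ(t,·)` bijective with everywhere invertible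
spatial derivative, `ψ` the (jointly `C²`) inverse, and `ρ₀ ∈ C¹`, the density
`ρ(t,x) = ρ₀(ψ(t,x)) · det(Dψ(t,x))` satisfies `ρ(0,·) = ρ₀` and
`∂ₜρ(t,x) + div(ρ(t,·) v(t,·))(x) = 0`. -/
theorem continuity_equation_for_pushforward_density
    (d : ℕ) (hd : 1 ≤ d)
    (v : ℝ × EuclideanSpace ℝ (Fin d) → EuclideanSpace ℝ (Fin d))
    (hv : ContDiff ℝ 2 v)
    (φ : ℝ × EuclideanSpace ℝ (Fin d) → EuclideanSpace ℝ (Fin d))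
    (hφ0 : ∀ x, φ (0, x) = x)
    (hφflow : ∀ t x, HasDerivAt (fun s => φ (s, x)) (v (t, φ (t, x))) t)
    (hφC2 : ContDiff ℝ 2 φ)
    (hφbij : ∀ t : ℝ, Function.Bijective (fun x => φ (t, x)))
    (hφinv : ∀ (t : ℝ) (x : EuclideanSpace ℝ (Fin d)),
      ∃ L : EuclideanSpace ℝ (Fin d) ≃L[ℝ] EuclideanSpace ℝ (Fin d),
        (L : EuclideanSpace ℝ (Fin d) →L[ℝ] EuclideanSpace ℝ (Fin d)) =
          fderiv ℝ (fun y => φ (t, y)) x)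
    (ψ : ℝ × EuclideanSpace ℝ (Fin d) → EuclideanSpace ℝ (Fin d))
    (hψC2 : ContDiff ℝ 2 ψ)
    (hψφ : ∀ t y, ψ (t, φ (t, y)) = y)
    (hφψ : ∀ t x, φ (t, ψ (t, x)) = x)
    (ρ₀ : EuclideanSpace ℝ (Fin d) → ℝ)
    (hρ₀ : ContDiff ℝ 1 ρ₀)
    (ρ : ℝ × EuclideanSpace ℝ (Fin d) → ℝ)
    (hρ : ∀ (t : ℝ) (x : EuclideanSpace ℝ (Fin d)),
      ρ (t, x) = ρ₀ (ψ (t, x)) * (fderiv ℝ (fun y => ψ (t, y)) x).det) :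
    (∀ x, ρ (0, x) = ρ₀ x) ∧
      ∀ (t : ℝ) (x : EuclideanSpace ℝ (Fin d)),
        deriv (fun s => ρ (s, x)) t +
          LinearMap.trace ℝ (EuclideanSpace ℝ (Fin d))
            (fderiv ℝ (fun y => ρ (t, y) • v (t, y)) x :
              EuclideanSpace ℝ (Fin d) →ₗ[ℝ] EuclideanSpace ℝ (Fin d)) = 0 := by
  classical
  open ContEqAux in
  have hφdiff : Differentiable ℝ φ := hφC2.differentiable (by norm_num)
  have hψdiff : Differentiable ℝ ψ := hψC2.differentiable (by norm_num)
  have hvdiff : Differentiable ℝ v := hv.differentiable (by norm_num)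
  set R : ℝ × EuclideanSpace ℝ (Fin d) → ℝ :=
    fun p => ρ₀ (ψ p) * Matrix.det (Matrix.of (ContEqAux.matOfL (ContEqAux.pD ψ p))) with hRdef
  have hρR : ρ = R := by
    funext p
    obtain ⟨t, x⟩ := p
    rw [hρ t x, hRdef]
    dsimp only
    rw [ContEqAux.of_matOfL, ContEqAux.det_matOf, (ContEqAux.pD_spatial hψdiff t x).fderiv]
  rw [hρR]
  have hRC1 : ContDiff ℝ 1 R := by
    rw [hRdef]
    apply ContDiff.mul
    · exact hρ₀.comp (hψC2.of_le one_le_two)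
    · have h1 : ContDiff ℝ 1 fun p => ContEqAux.detCM d (ContEqAux.matOfL (ContEqAux.pD ψ p)) :=
        (ContEqAux.detCM d).contDiff.comp
          ((ContEqAux.matOfL.contDiff).comp (ContEqAux.pD_contDiff hψC2))
      simpa [ContEqAux.detCM_apply] using h1
  have hRdiff : Differentiable ℝ R := hRC1.differentiable one_ne_zero
  constructor
  · intro x
    have hid : (fun y => ψ (0, y)) = fun y => y := funext fun y => by
      have h1 := hφ0 (ψ (0, y)); have h2 := hφψ 0 y; rw [h1] at h2; exact h2
    have hψ0 : ψ (0, x) = x := congrFun hid x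
    have hVid : ContEqAux.pD ψ (0, x) = ContinuousLinearMap.id ℝ _ := by
      have h := ContEqAux.pD_spatial hψdiff 0 x
      rw [hid] at h
      exact h.unique (hasFDerivAt_id x)
    show R (0, x) = ρ₀ x
    rw [hRdef]
    show ρ₀ (ψ (0, x)) * Matrix.det (Matrix.of (ContEqAux.matOfL (ContEqAux.pD ψ (0, x)))) = ρ₀ x
    rw [hψ0, ContEqAux.of_matOfL, ContEqAux.det_matOf, hVid]
    rw [show (ContinuousLinearMap.id ℝ (EuclideanSpace ℝ (Fin d))).det = 1 from by
      simp [ContinuousLinearMap.det], mul_one]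
  · intro t x
    set y₀ := ψ (t, x) with hy₀def
    have hx : φ (t, y₀) = x := hφψ t x
    have h1 : HasDerivAt (fun s => R (s, x)) ((fderiv ℝ R (t, x)) (1, 0)) t :=
      ContEqAux.hasDerivAt_partial_fst (hRdiff _)
    have hRx : HasFDerivAt (fun y => R (t, y)) (ContEqAux.pD R (t, x)) x :=
      ContEqAux.pD_spatial hRdiff t x
    have hvx : HasFDerivAt (fun y => v (t, y)) (ContEqAux.pD v (t, x)) x :=
      ContEqAux.pD_spatial hvdiff t x
    have hsmul : HasFDerivAt (fun y => R (t, y) • v (t, y))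
        (R (t, x) • ContEqAux.pD v (t, x) +
          (ContEqAux.pD R (t, x)).smulRight (v (t, x))) x := hRx.smul hvx
    set divv := LinearMap.trace ℝ (EuclideanSpace ℝ (Fin d))
      ((ContEqAux.pD v (t, x) : EuclideanSpace ℝ (Fin d) →L[ℝ] EuclideanSpace ℝ (Fin d)) :
        EuclideanSpace ℝ (Fin d) →ₗ[ℝ] EuclideanSpace ℝ (Fin d)) with hdivvdef
    have htrace : LinearMap.trace ℝ (EuclideanSpace ℝ (Fin d))
        ((fderiv ℝ (fun y => R (t, y) • v (t, y)) x :
          EuclideanSpace ℝ (Fin d) →L[ℝ] EuclideanSpace ℝ (Fin d)) :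
          EuclideanSpace ℝ (Fin d) →ₗ[ℝ] EuclideanSpace ℝ (Fin d))
        = R (t, x) * divv + (ContEqAux.pD R (t, x)) (v (t, x)) := by
      rw [hsmul.fderiv]
      rw [ContinuousLinearMap.coe_add, ContinuousLinearMap.coe_smul, map_add, map_smul,
        smul_eq_mul, ContEqAux.trace_smulRight']
    have hWx : ∀ (s : ℝ) z, HasFDerivAt (fun y => φ (s, y)) (ContEqAux.pD φ (s, z)) z :=
      ContEqAux.pD_spatial hφdiff
    have hVx : ∀ (s : ℝ) z, HasFDerivAt (fun y => ψ (s, y)) (ContEqAux.pD ψ (s, z)) z :=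
      ContEqAux.pD_spatial hψdiff
    have hVW : ∀ (s : ℝ) z, (ContEqAux.pD ψ (s, φ (s, z))).comp (ContEqAux.pD φ (s, z))
        = ContinuousLinearMap.id ℝ _ := by
      intro s z
      have hcomp : HasFDerivAt (fun y => ψ (s, φ (s, y)))
          ((ContEqAux.pD ψ (s, φ (s, z))).comp (ContEqAux.pD φ (s, z))) z :=
        ((hVx s (φ (s, z))).comp z (hWx s z) :)
      have hfun : (fun y => ψ (s, φ (s, y))) = fun y => y := funext fun y => hψφ s y
      rw [hfun] at hcomp
      exact hcomp.unique (hasFDerivAt_id z)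
    have hWV : (ContEqAux.pD φ (t, y₀)).comp (ContEqAux.pD ψ (t, x))
        = ContinuousLinearMap.id ℝ _ := by
      have hcomp : HasFDerivAt (fun z => φ (t, ψ (t, z)))
          ((ContEqAux.pD φ (t, y₀)).comp (ContEqAux.pD ψ (t, x))) x :=
        ((hWx t (ψ (t, x))).comp x (hVx t x) :)
      have hfun : (fun z => φ (t, ψ (t, z))) = fun z => z := funext fun z => hφψ t z
      rw [hfun] at hcomp
      exact hcomp.unique (hasFDerivAt_id x)
    have hVW' : (ContEqAux.pD ψ (t, x)).comp (ContEqAux.pD φ (t, y₀))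
        = ContinuousLinearMap.id ℝ _ := by
      have h := hVW t y₀
      rwa [hx] at h
    -- time derivative of the forward spatial derivative, via symmetry of second derivatives
    have hA' : ((fderiv ℝ (fderiv ℝ φ) (t, y₀) (1, 0)).comp
          (ContinuousLinearMap.inr ℝ ℝ (EuclideanSpace ℝ (Fin d))))
        = (ContEqAux.pD v (t, x)).comp (ContEqAux.pD φ (t, y₀)) := by
      refine ContinuousLinearMap.ext fun w => ?_
      show fderiv ℝ (fderiv ℝ φ) (t, y₀) (1, 0) ((0 : ℝ), w) = _
      rw [ContEqAux.snd_deriv_swap hφC2 t y₀ w]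
      have hfun : (fun z => fderiv ℝ φ (t, z) ((1 : ℝ), (0 : EuclideanSpace ℝ (Fin d))))
          = fun z => v (t, φ (t, z)) := by
        funext z
        have hchain : HasDerivAt (fun s => φ (s, z)) (fderiv ℝ φ (t, z) (1, 0)) t :=
          ContEqAux.hasDerivAt_partial_fst (hφdiff _)
        exact hchain.unique (hφflow t z)
      rw [hfun]
      have hcomp : HasFDerivAt (fun z => v (t, φ (t, z)))
          ((ContEqAux.pD v (t, φ (t, y₀))).comp (ContEqAux.pD φ (t, y₀))) y₀ :=
        ((ContEqAux.pD_spatial hvdiff t (φ (t, y₀))).comp y₀ (hWx t y₀) :)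
      rw [hcomp.fderiv, hx]
    have hWcurve : HasDerivAt (fun s => ContEqAux.pD φ (s, y₀))
        ((ContEqAux.pD v (t, x)).comp (ContEqAux.pD φ (t, y₀))) t := by
      have h := ContEqAux.pD_curve hφC2 t y₀
      rwa [hA'] at h
    have hmW : HasDerivAt (fun s => ContEqAux.matOfL (ContEqAux.pD φ (s, y₀)))
        (ContEqAux.matOfL ((ContEqAux.pD v (t, x)).comp (ContEqAux.pD φ (t, y₀)))) t :=
      (ContEqAux.matOfL.hasFDerivAt).comp_hasDerivAt t hWcurve
    have hdet : HasDerivAt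
        (fun s => Matrix.det (Matrix.of (ContEqAux.matOfL (ContEqAux.pD φ (s, y₀)))))
        ((Matrix.of (ContEqAux.matOfL (ContEqAux.pD φ (t, y₀)))).det *
          Matrix.trace (ContEqAux.matOf (ContEqAux.pD ψ (t, x)) *
            Matrix.of (ContEqAux.matOfL
              ((ContEqAux.pD v (t, x)).comp (ContEqAux.pD φ (t, y₀)))))) t := by
      apply ContEqAux.hasDerivAt_det_inv hmW (ContEqAux.matOf (ContEqAux.pD ψ (t, x)))
      · rw [ContEqAux.of_matOfL, ← ContEqAux.matOf_comp, hVW', ContEqAux.matOf_id]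
      · rw [ContEqAux.of_matOfL, ← ContEqAux.matOf_comp, hWV, ContEqAux.matOf_id]
    have htr2 : Matrix.trace (ContEqAux.matOf (ContEqAux.pD ψ (t, x)) *
          Matrix.of (ContEqAux.matOfL
            ((ContEqAux.pD v (t, x)).comp (ContEqAux.pD φ (t, y₀))))) = divv := by
      rw [ContEqAux.of_matOfL, ContEqAux.matOf_comp, Matrix.trace_mul_comm, Matrix.mul_assoc,
        ← ContEqAux.matOf_comp, hWV, ContEqAux.matOf_id, Matrix.mul_one, ContEqAux.trace_matOf]
    rw [htr2] at hdet
    set deta := (Matrix.of (ContEqAux.matOfL (ContEqAux.pD φ (t, y₀)))).det with hdetadef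
    -- the pushed-forward density is constant along the flow
    have hF : ∀ s : ℝ, R (s, φ (s, y₀)) *
        Matrix.det (Matrix.of (ContEqAux.matOfL (ContEqAux.pD φ (s, y₀)))) = ρ₀ y₀ := by
      intro s
      show (ρ₀ (ψ (s, φ (s, y₀))) *
        Matrix.det (Matrix.of (ContEqAux.matOfL (ContEqAux.pD ψ (s, φ (s, y₀)))))) * _ = _
      rw [hψφ s y₀, ContEqAux.of_matOfL, ContEqAux.det_matOf, ContEqAux.of_matOfL,
        ContEqAux.det_matOf, mul_assoc]
      have hdet1 : (ContEqAux.pD ψ (s, φ (s, y₀))).det * (ContEqAux.pD φ (s, y₀)).det = 1 := by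
        have h := congrArg
          (fun L : EuclideanSpace ℝ (Fin d) →L[ℝ] EuclideanSpace ℝ (Fin d) =>
            LinearMap.det (L : EuclideanSpace ℝ (Fin d) →ₗ[ℝ] EuclideanSpace ℝ (Fin d)))
          (hVW s y₀)
        simp only [ContinuousLinearMap.toLinearMap_comp, LinearMap.det_comp,
          ContinuousLinearMap.coe_id, LinearMap.det_id] at h
        exact h
      rw [hdet1, mul_one]
    have hG : HasDerivAt (fun s => R (s, φ (s, y₀))) ((fderiv ℝ R (t, x)) (1, v (t, x))) t := by
      have hc : HasDerivAt (fun s => ((s : ℝ), φ (s, y₀))) ((1 : ℝ), v (t, x)) t := by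
        have h := (hasDerivAt_id t).prodMk (hφflow t y₀)
        rwa [hx] at h
      have hR' : HasFDerivAt R (fderiv ℝ R (t, x)) (t, φ (t, y₀)) := by
        rw [hx]; exact (hRdiff _).hasFDerivAt
      exact hR'.comp_hasDerivAt t hc
    have hprod := hG.mul hdet
    have h0 : HasDerivAt (fun s => R (s, φ (s, y₀)) *
        Matrix.det (Matrix.of (ContEqAux.matOfL (ContEqAux.pD φ (s, y₀))))) 0 t := by
      have hFt : (fun s => R (s, φ (s, y₀)) *
          Matrix.det (Matrix.of (ContEqAux.matOfL (ContEqAux.pD φ (s, y₀)))))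
          = fun _ => ρ₀ y₀ := funext hF
      rw [hFt]
      exact hasDerivAt_const t _
    have hzero : (fderiv ℝ R (t, x)) (1, v (t, x)) * deta + R (t, φ (t, y₀)) * (deta * divv)
        = 0 := (h0.unique hprod).symm
    have hdetne : deta ≠ 0 := by
      have h := congrArg
        (fun L : EuclideanSpace ℝ (Fin d) →L[ℝ] EuclideanSpace ℝ (Fin d) =>
          LinearMap.det (L : EuclideanSpace ℝ (Fin d) →ₗ[ℝ] EuclideanSpace ℝ (Fin d))) hWV
      simp only [ContinuousLinearMap.toLinearMap_comp, LinearMap.det_comp,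
        ContinuousLinearMap.coe_id, LinearMap.det_id] at h
      have hdeta : deta = (ContEqAux.pD φ (t, y₀)).det := by
        rw [hdetadef, ContEqAux.of_matOfL, ContEqAux.det_matOf]
      rw [hdeta]
      exact left_ne_zero_of_mul_eq_one h
    rw [h1.deriv, htrace]
    have hsplit : (fderiv ℝ R (t, x)) (1, v (t, x))
        = (fderiv ℝ R (t, x)) (1, 0) + (ContEqAux.pD R (t, x)) (v (t, x)) := by
      have hv1 : ((1 : ℝ), v (t, x)) = ((1 : ℝ), (0 : EuclideanSpace ℝ (Fin d)))
          + ((0 : ℝ), v (t, x)) := by simp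
      rw [hv1, map_add]
      rfl
    rw [hsplit, hx] at hzero
    have h2 : ((fderiv ℝ R (t, x)) (1, 0) +
        (R (t, x) * divv + (ContEqAux.pD R (t, x)) (v (t, x)))) * deta = 0 := by
      linear_combination hzero
    rcases mul_eq_zero.mp h2 with h | h
    · exact h
    · exact absurd h hdetne
end
end

section
/- Let d ≥ 1, let v : ℝ^d → ℝ^d be C¹ and 2π-periodic in each coordinate (v(x + 2π m) = v(x) for all x ∈ ℝ^d and m ∈ ℤ^d), and let Φ := id + v. Assume det(DΦ(x)) > 0 for all x and that Φ : ℝ^d → ℝ^d is a bijection. Then for every continuous f : ℝ^d → ℝ that is 2π-periodic in each coordinate, ∫_{[0,2π]^d} f(Φ(x)) · det(DΦ(x)) dx = ∫_{[0,2π]^d} f(x) dx. -/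
open scoped Real

open MeasureTheory

/-- periodic change of variables: if `v : ℝ^d → ℝ^d` is `C¹` and `2π`-periodic
in each coordinate, `Φ = id + v` is a bijection of `ℝ^d` with `det DΦ > 0` everywhere, then
for every continuous `2π`-periodic `f : ℝ^d → ℝ`,
`∫_{[0,2π]^d} f(Φ(x)) det(DΦ(x)) dx = ∫_{[0,2π]^d} f(x) dx`. -/
theorem periodic_change_of_variables
    (d : ℕ) (hd : 1 ≤ d)
    (v : (Fin d → ℝ) → (Fin d → ℝ))
    (hv : ContDiff ℝ 1 v)
    (hvper : ∀ (x : Fin d → ℝ) (m : Fin d → ℤ),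
      v (x + fun i => 2 * π * (m i : ℝ)) = v x)
    (Φ : (Fin d → ℝ) → (Fin d → ℝ))
    (hΦ : ∀ x, Φ x = x + v x)
    (hdet : ∀ x, 0 < (fderiv ℝ Φ x).det)
    (hΦbij : Function.Bijective Φ)
    (f : (Fin d → ℝ) → ℝ)
    (hf : Continuous f)
    (hfper : ∀ (x : Fin d → ℝ) (m : Fin d → ℤ),
      f (x + fun i => 2 * π * (m i : ℝ)) = f x) :
    ∫ x in Set.Icc (0 : Fin d → ℝ) (fun _ => 2 * π), f (Φ x) * (fderiv ℝ Φ x).det =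
      ∫ x in Set.Icc (0 : Fin d → ℝ) (fun _ => 2 * π), f x := by
  have hπ : (0:ℝ) < 2 * π := by positivity
  have hΦfun : Φ = fun x => x + v x := funext hΦ
  have hΦc : ContDiff ℝ 1 Φ := by
    rw [hΦfun]; exact contDiff_id.add hv
  have hΦd : Differentiable ℝ Φ := hΦc.differentiable one_ne_zero
  have hΦper : ∀ (x : Fin d → ℝ) (m : Fin d → ℤ),
      Φ (x + fun i => 2 * π * (m i : ℝ)) = Φ x + fun i => 2 * π * (m i : ℝ) := by
    intro x m
    rw [hΦ, hΦ, hvper, add_right_comm]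
  -- the rescaled basis, with lattice `2π ℤ^d`
  let w : Fin d → ℝˣ := fun _ => Units.mk0 (2 * π) hπ.ne'
  let b : Module.Basis (Fin d) ℝ (Fin d → ℝ) := (Pi.basisFun ℝ (Fin d)).unitsSMul w
  have hrepr : ∀ (x : Fin d → ℝ) i, b.repr x i = (2 * π)⁻¹ * x i := by
    intro x i
    rw [Module.Basis.repr_unitsSMul, Pi.basisFun_repr]
    simp [w, Units.smul_def]
  have hmem : ∀ y : Fin d → ℝ, y ∈ Submodule.span ℤ (Set.range ⇑b) →
      ∃ m : Fin d → ℤ, y = fun i => 2 * π * (m i : ℝ) := by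
    intro y hy
    rw [Module.Basis.mem_span_iff_repr_mem] at hy
    choose m hm using hy
    refine ⟨m, funext fun i => ?_⟩
    have h1 := hm i
    rw [hrepr] at h1
    have h2 : (algebraMap ℤ ℝ) (m i) = (m i : ℝ) := rfl
    rw [h2] at h1
    have : 2 * π * (m i : ℝ) = 2 * π * ((2 * π)⁻¹ * y i) := by rw [h1]
    rw [← mul_assoc, mul_inv_cancel₀ hπ.ne', one_mul] at this
    exact this.symm
  -- the fundamental domains
  have hFD : IsAddFundamentalDomain (Submodule.span ℤ (Set.range ⇑b))
      (ZSpan.fundamentalDomain b) volume := ZSpan.isAddFundamentalDomain b volume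
  -- Φ as a homeomorphism
  have hstrict : ∀ x : Fin d → ℝ, HasStrictFDerivAt Φ
      (((fderiv ℝ Φ x).toContinuousLinearEquivOfDetNeZero (hdet x).ne' :
        (Fin d → ℝ) ≃L[ℝ] (Fin d → ℝ)) : (Fin d → ℝ) →L[ℝ] (Fin d → ℝ)) x := by
    intro x
    rw [ContinuousLinearMap.coe_toContinuousLinearEquivOfDetNeZero]
    exact hΦc.hasStrictFDerivAt one_ne_zero
  have hopen : IsOpenMap Φ := isOpenMap_of_hasStrictFDerivAt_equiv hstrict
  let eΦ : (Fin d → ℝ) ≃ (Fin d → ℝ) := Equiv.ofBijective Φ hΦbij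
  let Φh : (Fin d → ℝ) ≃ₜ (Fin d → ℝ) :=
    Equiv.toHomeomorphOfContinuousOpen eΦ hΦc.continuous hopen
  have hqmp : Measure.QuasiMeasurePreserving eΦ.symm
      (volume : Measure (Fin d → ℝ)) volume := by
    have hms : Measurable (⇑eΦ.symm) := Φh.symm.continuous.measurable
    refine ⟨hms, ?_⟩
    refine Measure.AbsolutelyContinuous.mk fun s hs h0 => ?_
    rw [Measure.map_apply hms hs]
    have himg : eΦ.symm ⁻¹' s = Φ '' s := by
      rw [← Equiv.image_eq_preimage_symm]; rfl
    rw [himg]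
    exact addHaar_image_eq_zero_of_differentiableOn_of_addHaar_eq_zero volume
      (hΦd.differentiableOn) h0
  -- image fundamental domain
  have hFD2 : IsAddFundamentalDomain (Submodule.span ℤ (Set.range ⇑b))
      (eΦ '' ZSpan.fundamentalDomain b) volume := by
    refine hFD.image_of_equiv eΦ hqmp (Equiv.refl _) fun g => ?_
    intro x
    obtain ⟨m, hm⟩ := hmem g g.2
    show Φ ((g : Fin d → ℝ) + x) = (g : Fin d → ℝ) + Φ x
    rw [add_comm, hm, hΦper, add_comm]
  -- invariance of f
  have hfinv : ∀ (g : ↥(Submodule.span ℤ (Set.range ⇑b))) (x : Fin d → ℝ),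
      f (g +ᵥ x) = f x := by
    intro g x
    obtain ⟨m, hm⟩ := hmem g g.2
    show f ((g : Fin d → ℝ) + x) = f x
    rw [add_comm, hm]
    exact hfper x m
  haveI : MeasurableVAdd (↥(Submodule.span ℤ (Set.range ⇑b))) (Fin d → ℝ) := by
    refine @MeasurableVAdd.mk _ _ _ _ _ ⟨?_⟩ ?_
    · intro c
      have : (fun x : Fin d → ℝ => c +ᵥ x) = fun x => (c : Fin d → ℝ) + x := rfl
      rw [this]; exact measurable_const_add _
    · intro x
      have : (fun c : ↥(Submodule.span ℤ (Set.range ⇑b)) => c +ᵥ x) =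
          fun c : ↥(Submodule.span ℤ (Set.range ⇑b)) => (c : Fin d → ℝ) + x := rfl
      rw [this]; exact measurable_subtype_coe.add measurable_const
  haveI : VAddInvariantMeasure (↥(Submodule.span ℤ (Set.range ⇑b))) (Fin d → ℝ) volume := by
    constructor
    intro c s hs
    have : (fun x : Fin d → ℝ => c +ᵥ x) ⁻¹' s =
        (fun x : Fin d → ℝ => (c : Fin d → ℝ) + x) ⁻¹' s := rfl
    rw [this]
    exact measure_preimage_add volume _ s
  have key : ∫ x in ZSpan.fundamentalDomain b, f x =
      ∫ x in eΦ '' ZSpan.fundamentalDomain b, f x :=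
    hFD.setIntegral_eq hFD2 hfinv
  -- change of variables on the fundamental domain
  have hD : MeasurableSet (ZSpan.fundamentalDomain b) :=
    ZSpan.fundamentalDomain_measurableSet b
  have hinj : Set.InjOn Φ (ZSpan.fundamentalDomain b) := hΦbij.injective.injOn
  have hder : ∀ x ∈ ZSpan.fundamentalDomain b,
      HasFDerivWithinAt Φ (fderiv ℝ Φ x) (ZSpan.fundamentalDomain b) x :=
    fun x _ => (hΦd x).hasFDerivAt.hasFDerivWithinAt
  have cov := integral_image_eq_integral_abs_det_fderiv_smul volume hD hder hinj f
  have himg2 : eΦ '' ZSpan.fundamentalDomain b = Φ '' ZSpan.fundamentalDomain b := rfl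
  have cov' : ∫ x in ZSpan.fundamentalDomain b, f (Φ x) * (fderiv ℝ Φ x).det =
      ∫ x in ZSpan.fundamentalDomain b, f x := by
    rw [key, himg2, cov]
    refine setIntegral_congr_fun hD fun x _ => ?_
    rw [abs_of_pos (hdet x), smul_eq_mul, mul_comm]
  -- identify the fundamental domain with the cube up to measure zero
  have hDeq : ZSpan.fundamentalDomain b =
      Set.pi Set.univ (fun _ : Fin d => Set.Ico (0:ℝ) (2*π)) := by
    ext x
    simp only [ZSpan.fundamentalDomain, Set.mem_setOf_eq, Set.mem_pi, Set.mem_univ,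
      true_implies, Set.mem_Ico]
    refine forall_congr' fun i => ?_
    rw [hrepr, inv_mul_eq_div]
    constructor
    · rintro ⟨h1, h2⟩
      refine ⟨?_, (div_lt_one hπ).mp h2⟩
      have := (le_div_iff₀ hπ).mp h1
      linarith
    · rintro ⟨h1, h2⟩
      exact ⟨div_nonneg h1 hπ.le, (div_lt_one hπ).mpr h2⟩
  have hae : ZSpan.fundamentalDomain b =ᵐ[(volume : Measure (Fin d → ℝ))]
      Set.Icc (0 : Fin d → ℝ) (fun _ => 2 * π) := by
    rw [hDeq, volume_pi]
    exact Measure.univ_pi_Ico_ae_eq_Icc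
  calc ∫ x in Set.Icc (0 : Fin d → ℝ) (fun _ => 2 * π), f (Φ x) * (fderiv ℝ Φ x).det
      = ∫ x in ZSpan.fundamentalDomain b, f (Φ x) * (fderiv ℝ Φ x).det :=
        (setIntegral_congr_set hae).symm
    _ = ∫ x in ZSpan.fundamentalDomain b, f x := cov'
    _ = ∫ x in Set.Icc (0 : Fin d → ℝ) (fun _ => 2 * π), f x := setIntegral_congr_set hae
end

section
/- Let d ≥ 1, let v : ℝ × ℝ^d → ℝ^d be continuous, let φ be a flow of v that is jointly C¹, and let ψ : ℝ × ℝ^d → ℝ^d be jointly C¹ with ψ(t, φ(t,y)) = y and φ(t, ψ(t,x)) = x for all (t,x,y). Let u₀ : ℝ^d → ℝ be C¹. Then u(t,x) := u₀(ψ(t,x)) satisfies u(0,·) = u₀ and the transport equation ∂_t u(t,x) + ⟨v(t,x), ∇_x u(t,x)⟩ = 0 for all (t,x). -/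
/-- pullback along the inverse flow solves the transport equation: with `φ` a
jointly `C¹` flow of a continuous time-dependent vector field `v` on `ℝ^d`, `ψ` its jointly
`C¹` two-sided inverse, and `u₀ ∈ C¹`, the function `u(t,x) = u₀(ψ(t,x))` satisfies
`u(0,·) = u₀` and `∂ₜu(t,x) + ⟨v(t,x), ∇ₓu(t,x)⟩ = 0`. -/
theorem pullback_solves_transport_equation
    (d : ℕ) (hd : 1 ≤ d)
    (v : ℝ × EuclideanSpace ℝ (Fin d) → EuclideanSpace ℝ (Fin d))
    (hv : Continuous v)
    (φ : ℝ × EuclideanSpace ℝ (Fin d) → EuclideanSpace ℝ (Fin d))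
    (hφ0 : ∀ x, φ (0, x) = x)
    (hφflow : ∀ t x, HasDerivAt (fun s => φ (s, x)) (v (t, φ (t, x))) t)
    (hφC1 : ContDiff ℝ 1 φ)
    (ψ : ℝ × EuclideanSpace ℝ (Fin d) → EuclideanSpace ℝ (Fin d))
    (hψC1 : ContDiff ℝ 1 ψ)
    (hψφ : ∀ t y, ψ (t, φ (t, y)) = y)
    (hφψ : ∀ t x, φ (t, ψ (t, x)) = x)
    (u₀ : EuclideanSpace ℝ (Fin d) → ℝ)
    (hu₀ : ContDiff ℝ 1 u₀)
    (u : ℝ × EuclideanSpace ℝ (Fin d) → ℝ)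
    (hu : ∀ (t : ℝ) (x : EuclideanSpace ℝ (Fin d)), u (t, x) = u₀ (ψ (t, x))) :
    (∀ x, u (0, x) = u₀ x) ∧
      ∀ (t : ℝ) (x : EuclideanSpace ℝ (Fin d)),
        deriv (fun s => u (s, x)) t +
          (inner ℝ (v (t, x)) (gradient (fun y => u (t, y)) x) : ℝ) = 0 := by
  set U : ℝ × EuclideanSpace ℝ (Fin d) → ℝ := fun p => u₀ (ψ p) with hU
  have hUC1 : ContDiff ℝ 1 U := hu₀.comp hψC1
  have hUeq : ∀ p : ℝ × EuclideanSpace ℝ (Fin d), u p = U p := fun p => hu p.1 p.2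
  constructor
  · intro x
    rw [hu 0 x, ← hφ0 x, hψφ 0 x, hφ0 x]
  · intro t x
    set y := ψ (t, x) with hy
    have hφty : φ (t, y) = x := hφψ t x
    -- the full Fréchet derivative of U at (t, x)
    have hUdiff : DifferentiableAt ℝ U (t, x) := hUC1.differentiable one_ne_zero _
    set D := fderiv ℝ U (t, x) with hD
    have hUfd : HasFDerivAt U D (t, x) := hUdiff.hasFDerivAt
    -- curve s ↦ (s, φ (s, y)) passes through (t, x) with velocity (1, v (t, x))
    have hc : HasDerivAt (fun s => (s, φ (s, y))) ((1 : ℝ), v (t, x)) t := by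
      have h1 : HasDerivAt (fun s : ℝ => s) 1 t := hasDerivAt_id t
      have h2 : HasDerivAt (fun s => φ (s, y)) (v (t, x)) t := by
        have := hφflow t y; rwa [hφty] at this
      exact HasDerivAt.prodMk h1 h2
    -- U is constant along this curve
    have hconst : (fun s => U (s, φ (s, y))) = fun _ => u₀ y := by
      funext s; simp [hU, hψφ s y]
    have hUfd' : HasFDerivAt U D (t, φ (t, y)) := by rw [hφty]; exact hUfd
    have hchain : HasDerivAt (fun s => U (s, φ (s, y))) (D (1, v (t, x))) t :=
      by have := HasFDerivAt.comp_hasDerivAt t hUfd' hc; exact this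
    have hzero : D (1, v (t, x)) = 0 := by
      have : HasDerivAt (fun s => U (s, φ (s, y))) 0 t := by
        rw [hconst]; exact hasDerivAt_const t _
      exact hchain.unique this
    -- time derivative
    have htime : HasDerivAt (fun s => u (s, x)) (D (1, 0)) t := by
      have hcurve : HasDerivAt (fun s : ℝ => (s, x)) ((1 : ℝ), (0 : EuclideanSpace ℝ (Fin d))) t :=
        HasDerivAt.prodMk (hasDerivAt_id t) (hasDerivAt_const t x)
      have := HasFDerivAt.comp_hasDerivAt t hUfd hcurve
      have heq : (fun s => u (s, x)) = fun s => U (s, x) := by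
        funext s; exact hUeq (s, x)
      rw [heq]; exact this
    -- spatial gradient
    have hspace : HasFDerivAt (fun z : EuclideanSpace ℝ (Fin d) => U (t, z)) (D.comp (ContinuousLinearMap.inr ℝ ℝ (EuclideanSpace ℝ (Fin d))))
        x := by
      have hcurve : HasFDerivAt (fun z : EuclideanSpace ℝ (Fin d) => ((t : ℝ), z))
          (ContinuousLinearMap.inr ℝ ℝ (EuclideanSpace ℝ (Fin d))) x :=
        HasFDerivAt.prodMk (hasFDerivAt_const t x) (hasFDerivAt_id x)
      exact hUfd.comp x hcurve
    have hgrad : HasGradientAt (fun z : EuclideanSpace ℝ (Fin d) => u (t, z))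
        (gradient (fun z : EuclideanSpace ℝ (Fin d) => u (t, z)) x) x := by
      have heq : (fun z : EuclideanSpace ℝ (Fin d) => u (t, z)) = fun z : EuclideanSpace ℝ (Fin d) => U (t, z) := by
        funext z; exact hUeq (t, z)
      exact (heq ▸ hspace.differentiableAt : DifferentiableAt ℝ (fun z : EuclideanSpace ℝ (Fin d) => u (t, z)) x)
        |>.hasGradientAt
    have hgradfd : HasFDerivAt (fun z : EuclideanSpace ℝ (Fin d) => u (t, z))
        ((InnerProductSpace.toDual ℝ (EuclideanSpace ℝ (Fin d)))
          (gradient (fun z : EuclideanSpace ℝ (Fin d) => u (t, z)) x)) x :=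
      hgrad.hasFDerivAt
    have heq : (fun z : EuclideanSpace ℝ (Fin d) => u (t, z))
        = fun z : EuclideanSpace ℝ (Fin d) => U (t, z) := by
      funext z; exact hUeq (t, z)
    rw [heq] at hgradfd
    have hgeq : gradient (fun z : EuclideanSpace ℝ (Fin d) => u (t, z)) x
        = gradient (fun z : EuclideanSpace ℝ (Fin d) => U (t, z)) x := by rw [heq]
    have hDs : (InnerProductSpace.toDual ℝ (EuclideanSpace ℝ (Fin d)))
        (gradient (fun z : EuclideanSpace ℝ (Fin d) => U (t, z)) x)
        = D.comp (ContinuousLinearMap.inr ℝ ℝ (EuclideanSpace ℝ (Fin d))) := hgradfd.unique hspace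
    have hinner : (inner ℝ (gradient (fun z : EuclideanSpace ℝ (Fin d) => U (t, z)) x)
        (v (t, x)) : ℝ) = D (0, v (t, x)) := by
      have := congrArg (fun (L : EuclideanSpace ℝ (Fin d) →L[ℝ] ℝ) => L (v (t, x))) hDs
      simpa [InnerProductSpace.toDual_apply_apply] using this
    have hderiv : deriv (fun s => u (s, x)) t = D (1, 0) := htime.deriv
    have hsum : ((1 : ℝ), (0 : EuclideanSpace ℝ (Fin d))) + ((0 : ℝ), v (t, x))
        = (1, v (t, x)) := by simp
    rw [hderiv, real_inner_comm, hgeq, hinner, ← map_add, hsum]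
    exact hzero
end

section
/- Let d ≥ 1, let v : ℝ × ℝ^d → ℝ^d be continuous, let φ be a flow of v that is jointly C¹, and let ψ : ℝ × ℝ^d → ℝ^d be jointly C¹ with ψ(t, φ(t,y)) = y and φ(t, ψ(t,x)) = x for all (t,x,y). Let φ₀ : ℝ^d → ℝ be C¹ and f : ℝ × ℝ^d → ℝ be jointly C¹. Define u(t,x) := φ₀(ψ(t,x)) + ∫₀ᵗ f(s, φ(s, ψ(t,x))) ds. Then u(0,·) = φ₀ and u solves the forced transport equation: ∂_t u(t,x) + ⟨v(t,x), ∇_x u(t,x)⟩ = f(t,x) for all (t,x). -/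
set_option maxHeartbeats 1000000

open MeasureTheory intervalIntegral

/-- Joint differentiability of `(t,y) ↦ ∫ s in 0..t, g (s,y)` for `g` of class `C¹`. -/
lemma duhamel_aux_differentiableAt {E : Type*} [NormedAddCommGroup E] [NormedSpace ℝ E]
    [FiniteDimensional ℝ E]
    (g : ℝ × E → ℝ) (hg : ContDiff ℝ 1 g) (t₀ : ℝ) (y₀ : E) :
    DifferentiableAt ℝ (fun p : ℝ × E => ∫ s in (0:ℝ)..p.1, g (s, p.2)) (t₀, y₀) := by
  classical
  set P : E →L[ℝ] ℝ × E :=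
    (0 : E →L[ℝ] ℝ).prod (ContinuousLinearMap.id ℝ E) with hP
  set D : ℝ × E → (E →L[ℝ] ℝ) := fun p => (fderiv ℝ g p).comp P with hDdef
  have hDcont : Continuous D := (hg.continuous_fderiv one_ne_zero).clm_comp continuous_const
  have hpart : ∀ (s : ℝ) (z : E), HasFDerivAt (fun w => g (s, w)) (D (s, z)) z := by
    intro s z
    have h1 : HasFDerivAt (fun w : E => ((s : ℝ), w)) P z :=
      (hasFDerivAt_const s z).prodMk (hasFDerivAt_id z)
    exact ((hg.differentiable one_ne_zero (s, z)).hasFDerivAt).comp z h1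
  have hDy₀cont : Continuous fun s => D (s, y₀) :=
    hDcont.comp (continuous_id.prodMk continuous_const)
  set A : E →L[ℝ] ℝ := ∫ s in (0:ℝ)..t₀, D (s, y₀) with hA
  set L : (ℝ × E) →L[ℝ] ℝ :=
    g (t₀, y₀) • ContinuousLinearMap.fst ℝ ℝ E + A.comp (ContinuousLinearMap.snd ℝ ℝ E) with hL
  have main : HasFDerivAt (fun p : ℝ × E => ∫ s in (0:ℝ)..p.1, g (s, p.2)) L (t₀, y₀) := by
    rw [hasFDerivAt_iff_isLittleO, Asymptotics.isLittleO_iff]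
    intro ε hε
    -- continuity of g at the base point
    obtain ⟨δ₁, hδ₁pos, hδ₁⟩ :=
      Metric.continuousAt_iff.mp (hg.continuous.continuousAt (x := ((t₀ : ℝ), y₀)))
        (ε/2) (by positivity)
    -- uniform continuity of D on a compact set
    set K : Set (ℝ × E) := Set.uIcc (0:ℝ) t₀ ×ˢ Metric.closedBall y₀ 1 with hK
    have hKcomp : IsCompact K := isCompact_uIcc.prod (isCompact_closedBall _ _)
    have hUC := hKcomp.uniformContinuousOn_of_continuous hDcont.continuousOn
    set ε₂ : ℝ := ε / (2 * (|t₀| + 1)) with hε₂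
    have hε₂pos : 0 < ε₂ := by positivity
    obtain ⟨δ₂, hδ₂pos, hδ₂⟩ := Metric.uniformContinuousOn_iff.mp hUC ε₂ hε₂pos
    set δ : ℝ := min δ₁ (min δ₂ 1) with hδ
    have hδpos : 0 < δ := lt_min hδ₁pos (lt_min hδ₂pos one_pos)
    filter_upwards [Metric.ball_mem_nhds ((t₀ : ℝ), y₀) hδpos] with p hp
    obtain ⟨t, y⟩ := p
    have hpdist : dist ((t : ℝ), y) (t₀, y₀) < δ := hp
    have hdt : |t - t₀| ≤ dist ((t : ℝ), y) (t₀, y₀) :=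
      calc |t - t₀| = dist t t₀ := (Real.dist_eq t t₀).symm
        _ ≤ max (dist t t₀) (dist y y₀) := le_max_left _ _
        _ = dist ((t : ℝ), y) (t₀, y₀) := (Prod.dist_eq (x := ((t:ℝ), y)) (y := (t₀, y₀))).symm
    have hdy : ‖y - y₀‖ ≤ dist ((t : ℝ), y) (t₀, y₀) :=
      calc ‖y - y₀‖ = dist y y₀ := (dist_eq_norm y y₀).symm
        _ ≤ max (dist t t₀) (dist y y₀) := le_max_right _ _
        _ = dist ((t : ℝ), y) (t₀, y₀) := (Prod.dist_eq (x := ((t:ℝ), y)) (y := (t₀, y₀))).symm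
    have hnorm : ‖((t : ℝ), y) - (t₀, y₀)‖ = dist ((t : ℝ), y) (t₀, y₀) :=
      (dist_eq_norm _ _).symm
    -- continuity of integrands
    have hcy : Continuous fun s => g (s, y) :=
      hg.continuous.comp (continuous_id.prodMk continuous_const)
    have hcy₀ : Continuous fun s => g (s, y₀) :=
      hg.continuous.comp (continuous_id.prodMk continuous_const)
    have hcD : Continuous fun s => D (s, y₀) (y - y₀) :=
      (ContinuousLinearMap.apply ℝ ℝ (y - y₀)).continuous.comp hDy₀cont
    -- algebraic rewriting of the error term
    have hsplit : (∫ s in (0:ℝ)..t, g (s, y))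
        = (∫ s in (0:ℝ)..t₀, g (s, y)) + ∫ s in t₀..t, g (s, y) :=
      (integral_add_adjacent_intervals (hcy.intervalIntegrable _ _)
        (hcy.intervalIntegrable _ _)).symm
    have hAapp : A (y - y₀) = ∫ s in (0:ℝ)..t₀, D (s, y₀) (y - y₀) :=
      ContinuousLinearMap.intervalIntegral_apply (hDy₀cont.intervalIntegrable _ _) _
    have hLapp : L (((t : ℝ), y) - (t₀, y₀))
        = g (t₀, y₀) * (t - t₀) + ∫ s in (0:ℝ)..t₀, D (s, y₀) (y - y₀) := by
      have h2 : (((t : ℝ), y) - (t₀, y₀)) = (t - t₀, y - y₀) := rfl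
      rw [h2, hL, ContinuousLinearMap.add_apply, ContinuousLinearMap.smul_apply,
        ContinuousLinearMap.comp_apply, ← hAapp]
      simp [smul_eq_mul]
    have herr : (∫ s in (0:ℝ)..t, g (s, y)) - (∫ s in (0:ℝ)..t₀, g (s, y₀))
          - L (((t : ℝ), y) - (t₀, y₀))
        = (∫ s in t₀..t, (g (s, y) - g (t₀, y₀)))
          + ∫ s in (0:ℝ)..t₀, (g (s, y) - g (s, y₀) - D (s, y₀) (y - y₀)) := by
      rw [hLapp, integral_sub (hcy.intervalIntegrable _ _)
          (intervalIntegrable_const),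
        integral_sub ((show Continuous fun s => g (s, y) - g (s, y₀) from hcy.sub hcy₀).intervalIntegrable _ _) (hcD.intervalIntegrable _ _),
        integral_sub (hcy.intervalIntegrable _ _) (hcy₀.intervalIntegrable _ _),
        intervalIntegral.integral_const, hsplit]
      simp only [smul_eq_mul]
      ring
    -- bound the first part
    have hE₁ : ‖∫ s in t₀..t, (g (s, y) - g (t₀, y₀))‖ ≤ (ε/2) * |t - t₀| := by
      have hb : ∀ s ∈ Set.uIoc t₀ t, ‖g (s, y) - g (t₀, y₀)‖ ≤ ε/2 := by
        intro s hs
        have habs : |s - t₀| ≤ |t - t₀| := by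
          have h1 := le_abs_self (t - t₀)
          have h2 : t₀ - t ≤ |t - t₀| := by
            rw [abs_sub_comm]; exact le_abs_self _
          rcases Set.mem_uIoc.mp hs with ⟨ha, hb⟩ | ⟨ha, hb⟩ <;>
            rw [abs_sub_le_iff] <;> constructor <;> linarith
        have hdist : dist ((s : ℝ), y) (t₀, y₀) < δ₁ := by
          rw [Prod.dist_eq]
          have : dist s t₀ ≤ |t - t₀| := by rwa [Real.dist_eq]
          have hy' : dist y y₀ < δ := lt_of_le_of_lt (by rw [dist_eq_norm]; exact hdy) hpdist
          have ht' : dist s t₀ < δ := lt_of_le_of_lt this (lt_of_le_of_lt hdt hpdist)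
          have hmax : max (dist s t₀) (dist y y₀) < δ := max_lt ht' hy'
          exact lt_of_lt_of_le hmax (min_le_left _ _)
        have := hδ₁ hdist
        rw [Real.dist_eq] at this
        exact le_of_lt (by rwa [Real.norm_eq_abs])
      have := intervalIntegral.norm_integral_le_of_norm_le_const hb
      linarith [this]
    -- bound the second part
    have hyball : y ∈ Metric.ball y₀ δ := by
      rw [Metric.mem_ball, dist_eq_norm]
      exact lt_of_le_of_lt hdy hpdist
    have hy₀ball : y₀ ∈ Metric.ball y₀ δ := Metric.mem_ball_self hδpos
    have hE₂ : ‖∫ s in (0:ℝ)..t₀, (g (s, y) - g (s, y₀) - D (s, y₀) (y - y₀))‖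
        ≤ (ε₂ * ‖y - y₀‖) * |t₀ - 0| := by
      apply intervalIntegral.norm_integral_le_of_norm_le_const
      intro s hs
      have hsI : s ∈ Set.uIcc (0:ℝ) t₀ := Set.uIoc_subset_uIcc hs
      have hmvt : ‖g (s, y) - g (s, y₀) - (D (s, y₀)) (y - y₀)‖ ≤ ε₂ * ‖y - y₀‖ := by
        apply (convex_ball y₀ δ).norm_image_sub_le_of_norm_hasFDerivWithin_le'
          (f' := fun z => D (s, z))
          (fun z _ => (hpart s z).hasFDerivWithinAt) ?_ hy₀ball hyball
        intro z hz
        have hz1 : ‖z - y₀‖ < δ := by rwa [Metric.mem_ball, dist_eq_norm] at hz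
        have hzK : ((s : ℝ), z) ∈ K := by
          refine ⟨hsI, ?_⟩
          rw [Metric.mem_closedBall, dist_eq_norm]
          exact le_of_lt (lt_of_lt_of_le hz1 (le_trans (min_le_right _ _) (min_le_right _ _)))
        have hy₀K : ((s : ℝ), y₀) ∈ K := ⟨hsI, Metric.mem_closedBall_self zero_le_one⟩
        have hdzy : dist ((s : ℝ), z) (s, y₀) < δ₂ := by
          rw [Prod.dist_eq, dist_self, dist_eq_norm]
          rw [max_eq_right (norm_nonneg _)]
          exact lt_of_lt_of_le hz1 (le_trans (min_le_right _ _) (min_le_left _ _))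
        have := hδ₂ _ hzK _ hy₀K hdzy
        rw [dist_eq_norm] at this
        exact le_of_lt this
      exact hmvt
    -- combine
    have hdd0 : (0:ℝ) ≤ dist ((t : ℝ), y) (t₀, y₀) := dist_nonneg
    have h1 : (ε/2) * |t - t₀| ≤ (ε/2) * dist ((t : ℝ), y) (t₀, y₀) :=
      mul_le_mul_of_nonneg_left hdt (by positivity)
    have hkey : ε₂ * |t₀| ≤ ε/2 := by
      have hc : ε₂ * (2*(|t₀|+1)) = ε := div_mul_cancel₀ _ (by positivity)
      nlinarith [hε₂pos, abs_nonneg t₀]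
    have h2 : (ε₂ * ‖y - y₀‖) * |t₀ - 0| ≤ (ε/2) * dist ((t : ℝ), y) (t₀, y₀) := by
      have ht₀ : |t₀ - (0:ℝ)| = |t₀| := by norm_num
      calc (ε₂ * ‖y - y₀‖) * |t₀ - 0| = (ε₂ * |t₀|) * ‖y - y₀‖ := by rw [ht₀]; ring
        _ ≤ (ε/2) * ‖y - y₀‖ := mul_le_mul_of_nonneg_right hkey (norm_nonneg _)
        _ ≤ (ε/2) * dist ((t : ℝ), y) (t₀, y₀) :=
            mul_le_mul_of_nonneg_left hdy (by positivity)
    calc ‖(∫ s in (0:ℝ)..t, g (s, y)) - (∫ s in (0:ℝ)..t₀, g (s, y₀))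
          - L (((t : ℝ), y) - (t₀, y₀))‖
        = ‖(∫ s in t₀..t, (g (s, y) - g (t₀, y₀)))
            + ∫ s in (0:ℝ)..t₀, (g (s, y) - g (s, y₀) - D (s, y₀) (y - y₀))‖ := by rw [herr]
      _ ≤ ‖∫ s in t₀..t, (g (s, y) - g (t₀, y₀))‖
            + ‖∫ s in (0:ℝ)..t₀, (g (s, y) - g (s, y₀) - D (s, y₀) (y - y₀))‖ := norm_add_le _ _
      _ ≤ (ε/2) * |t - t₀| + (ε₂ * ‖y - y₀‖) * |t₀ - 0| := add_le_add hE₁ hE₂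
      _ ≤ ε * ‖((t : ℝ), y) - (t₀, y₀)‖ := by rw [hnorm]; linarith
  exact main.differentiableAt
/-- Duhamel's principle for the forced transport equation: with `φ` a jointly
`C¹` flow of a continuous time-dependent vector field `v` on `ℝ^d`, `ψ` its jointly `C¹`
two-sided inverse, `φ₀ ∈ C¹`, and `f` jointly `C¹`, the function
`u(t,x) = φ₀(ψ(t,x)) + ∫₀ᵗ f(s, φ(s, ψ(t,x))) ds` satisfies `u(0,·) = φ₀` and
`∂ₜu(t,x) + ⟨v(t,x), ∇ₓu(t,x)⟩ = f(t,x)`. -/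
theorem duhamel_forced_transport
    (d : ℕ) (hd : 1 ≤ d)
    (v : ℝ × EuclideanSpace ℝ (Fin d) → EuclideanSpace ℝ (Fin d))
    (hv : Continuous v)
    (φ : ℝ × EuclideanSpace ℝ (Fin d) → EuclideanSpace ℝ (Fin d))
    (hφ0 : ∀ x, φ (0, x) = x)
    (hφflow : ∀ t x, HasDerivAt (fun s => φ (s, x)) (v (t, φ (t, x))) t)
    (hφC1 : ContDiff ℝ 1 φ)
    (ψ : ℝ × EuclideanSpace ℝ (Fin d) → EuclideanSpace ℝ (Fin d))
    (hψC1 : ContDiff ℝ 1 ψ)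
    (hψφ : ∀ t y, ψ (t, φ (t, y)) = y)
    (hφψ : ∀ t x, φ (t, ψ (t, x)) = x)
    (φ₀ : EuclideanSpace ℝ (Fin d) → ℝ)
    (hφ₀ : ContDiff ℝ 1 φ₀)
    (f : ℝ × EuclideanSpace ℝ (Fin d) → ℝ)
    (hf : ContDiff ℝ 1 f)
    (u : ℝ × EuclideanSpace ℝ (Fin d) → ℝ)
    (hu : ∀ (t : ℝ) (x : EuclideanSpace ℝ (Fin d)),
      u (t, x) = φ₀ (ψ (t, x)) + ∫ s in (0:ℝ)..t, f (s, φ (s, ψ (t, x)))) :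
    (∀ x, u (0, x) = φ₀ x) ∧
      ∀ (t : ℝ) (x : EuclideanSpace ℝ (Fin d)),
        deriv (fun s => u (s, x)) t +
          (inner ℝ (v (t, x)) (gradient (fun y => u (t, y)) x) : ℝ) = f (t, x) := by
  have hψ00 : ∀ x, ψ (0, x) = x := fun x => (hφ0 (ψ (0, x))).symm.trans (hφψ 0 x)
  constructor
  · intro x
    rw [hu 0 x, hψ00 x]
    simp
  intro t x
  set g : ℝ × EuclideanSpace ℝ (Fin d) → ℝ := fun p => f (p.1, φ p) with hgdef
  have hgC1 : ContDiff ℝ 1 g := hf.comp (contDiff_fst.prodMk hφC1)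
  have hgc : Continuous g := hgC1.continuous
  have hueq : u = fun p : ℝ × EuclideanSpace ℝ (Fin d) =>
      φ₀ (ψ p) + ∫ s in (0:ℝ)..p.1, g (s, ψ p) := by
    funext p
    have := hu p.1 p.2
    simpa [hgdef] using this
  -- joint differentiability of u at (t, x)
  have huD : DifferentiableAt ℝ u (t, x) := by
    rw [hueq]
    have h1 : DifferentiableAt ℝ (fun p : ℝ × EuclideanSpace ℝ (Fin d) => φ₀ (ψ p)) (t, x) :=
      ((hφ₀.comp hψC1).differentiable one_ne_zero) (t, x)
    have hmap : DifferentiableAt ℝ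
        (fun p : ℝ × EuclideanSpace ℝ (Fin d) => ((p.1 : ℝ), ψ p)) (t, x) :=
      (differentiableAt_fst).prodMk ((hψC1.differentiable one_ne_zero) (t, x))
    have hkey := duhamel_aux_differentiableAt g hgC1 t (ψ (t, x))
    have h2 : DifferentiableAt ℝ
        (fun p : ℝ × EuclideanSpace ℝ (Fin d) => ∫ s in (0:ℝ)..p.1, g (s, ψ p)) (t, x) :=
      by have := DifferentiableAt.comp (t, x) hkey hmap; exact this
    exact h1.add h2
  set Du := fderiv ℝ u (t, x) with hDudef
  have hDu : HasFDerivAt u Du (t, x) := huD.hasFDerivAt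
  set y := ψ (t, x) with hydef
  have hxy : φ (t, y) = x := hφψ t x
  -- time derivative
  have hA : HasDerivAt (fun s => u (s, x)) (Du (1, 0)) t := by
    have hc : HasDerivAt (fun s : ℝ => ((s, x) : ℝ × EuclideanSpace ℝ (Fin d))) (1, 0) t :=
      (hasDerivAt_id t).prodMk (hasDerivAt_const t x)
    exact hDu.comp_hasDerivAt t hc
  have hderiv_eq : deriv (fun s => u (s, x)) t = Du (1, 0) := hA.deriv
  -- spatial derivative and gradient
  set P : EuclideanSpace ℝ (Fin d) →L[ℝ] ℝ × EuclideanSpace ℝ (Fin d) :=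
    (0 : EuclideanSpace ℝ (Fin d) →L[ℝ] ℝ).prod (ContinuousLinearMap.id ℝ _) with hP
  have hB : HasFDerivAt (fun z => u (t, z)) (Du.comp P) x := by
    have hc : HasFDerivAt (fun z : EuclideanSpace ℝ (Fin d) =>
        ((t, z) : ℝ × EuclideanSpace ℝ (Fin d))) P x :=
      (hasFDerivAt_const t x).prodMk (hasFDerivAt_id x)
    exact hDu.comp x hc
  have hgrad : gradient (fun z => u (t, z)) x
      = (InnerProductSpace.toDual ℝ (EuclideanSpace ℝ (Fin d))).symm (Du.comp P) := by
    rw [gradient, hB.fderiv]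
  have hinner : (inner ℝ (v (t, x)) (gradient (fun z => u (t, z)) x) : ℝ)
      = Du (0, v (t, x)) := by
    rw [real_inner_comm, hgrad, InnerProductSpace.toDual_symm_apply]
    simp [hP]
  -- derivative along the characteristic curve
  have hC : HasDerivAt (fun s => u (s, φ (s, y))) (Du (1, v (t, x))) t := by
    have hcurve : HasDerivAt (fun s : ℝ =>
        ((s, φ (s, y)) : ℝ × EuclideanSpace ℝ (Fin d))) (1, v (t, x)) t := by
      have h := (hasDerivAt_id t).prodMk (hφflow t y)
      rwa [hxy] at h
    have hDu' : HasFDerivAt u Du (t, φ (t, y)) := by rw [hxy]; exact hDu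
    exact hDu'.comp_hasDerivAt t hcurve
  have hC' : HasDerivAt (fun s => u (s, φ (s, y))) (f (t, x)) t := by
    have heq : (fun s => u (s, φ (s, y)))
        = fun s => φ₀ y + ∫ r in (0:ℝ)..s, g (r, y) := by
      funext s
      rw [hu s (φ (s, y)), hψφ s y]
    rw [heq]
    have hcont : Continuous fun r => g (r, y) :=
      hgc.comp (continuous_id.prodMk continuous_const)
    have h := ((hcont.integral_hasStrictDerivAt 0 t).hasDerivAt).const_add (φ₀ y)
    have hval : g (t, y) = f (t, x) := by rw [hgdef]; simp only []; rw [hxy]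
    rwa [hval] at h
  have huniq : Du (1, v (t, x)) = f (t, x) := hC.unique hC'
  have hlin : Du (1, v (t, x)) = Du (1, 0) + Du (0, v (t, x)) := by
    rw [← ContinuousLinearMap.map_add]
    norm_num
  rw [hderiv_eq, hinner]
  linarith [huniq, hlin]
end
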